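/- arXiv:1909.07656 — 5 statements merged into one kernel-verified Lean document; each statement's English description precedes it below -/
import Mathlib

section
/- (ℕ_B^∞, min, ∞, +_B, 0) is a commutative semiring; its induced relation x ⊑ y (defined by: there exists z with min x z = y) coincides with y ≤ x; and it satisfies Assumption 1 of the paper: (ℕ_B^∞, ⊑) is a complete lattice with ⊑-bottom ∞ and ⊑-top 0, and both min and +_B preserve suprema of ⊑-increasing ω-chains and infima of ⊑-decreasing ω-chains in each argument. -/
/-- The carrier `ℕ_B^∞ = {0, 1, …, B} ∪ {∞}` as a subtype of `ℕ∞`, with the inherited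
order. -/
abbrev NB (B : ℕ) : Type := {n : ℕ∞ // n ≤ (B : ℕ∞) ∨ n = ⊤}

/-- The element `∞` of `ℕ_B^∞` (the additive unit, i.e. the semiring zero). -/
def NB.infty (B : ℕ) : NB B := ⟨⊤, Or.inr rfl⟩

/-- The element `0` of `ℕ_B^∞` (the multiplicative unit, i.e. the semiring one). -/
def NB.zero (B : ℕ) : NB B := ⟨0, Or.inl zero_le⟩

/-- Capped addition `m +_B n` on `ℕ_B^∞` (the semiring multiplication). -/
def NB.add (B : ℕ) (m n : NB B) : NB B :=
  if h : m.1 + n.1 ≤ (B : ℕ∞) then ⟨m.1 + n.1, Or.inl h⟩ else ⟨⊤, Or.inr rfl⟩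

/-! ### Auxiliary material -/

/-- Capping at `B` in `ℕ∞`. -/
def capN (B : ℕ) (x : ℕ∞) : ℕ∞ := if x ≤ (B:ℕ∞) then x else ⊤

variable {B : ℕ}

lemma NB.add_val (m n : NB B) : (NB.add B m n).1 = capN B (m.1 + n.1) := by
  rw [NB.add, capN]; split <;> simp_all

lemma capN_add_left (s c : ℕ∞) : capN B (capN B s + c) = capN B (s + c) := by
  by_cases h : s ≤ (B:ℕ∞)
  · simp only [capN, if_pos h]
  · have h2 : ¬ (s + c ≤ (B:ℕ∞)) := fun hh => h (le_trans le_self_add hh)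
    simp only [capN, if_neg h, if_neg h2, top_add,
      if_neg (show ¬(⊤:ℕ∞) ≤ (B:ℕ∞) by simp)]

lemma capN_add_right (s c : ℕ∞) : capN B (c + capN B s) = capN B (c + s) := by
  rw [add_comm c, add_comm c, capN_add_left]

lemma capN_mono : Monotone (capN B) := by
  intro x y h
  by_cases hy : y ≤ (B:ℕ∞)
  · simp only [capN, if_pos hy, if_pos (le_trans h hy)]; exact h
  · simp only [capN, if_neg hy]; exact le_top

lemma capN_eq_self (x : NB B) : capN B x.1 = x.1 := by
  rcases x.2 with h | h
  · rw [capN, if_pos h]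
  · rw [capN, h]; simp

lemma NB.coe_le_coe {x y : NB B} : x.1 ≤ y.1 ↔ x ≤ y := Subtype.coe_le_coe

lemma NB.add_assoc' (a b c : NB B) :
    NB.add B (NB.add B a b) c = NB.add B a (NB.add B b c) := by
  apply Subtype.ext
  rw [NB.add_val, NB.add_val, NB.add_val, NB.add_val, capN_add_left, capN_add_right,
    _root_.add_assoc]

lemma NB.add_comm' (a b : NB B) : NB.add B a b = NB.add B b a := by
  apply Subtype.ext; rw [NB.add_val, NB.add_val, _root_.add_comm]

lemma NB.zero_add' (a : NB B) : NB.add B (NB.zero B) a = a := by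
  apply Subtype.ext; rw [NB.add_val]
  show capN B ((0:ℕ∞) + a.1) = a.1
  rw [zero_add, capN_eq_self]

lemma NB.top_add' (a : NB B) : NB.add B (NB.infty B) a = NB.infty B := by
  apply Subtype.ext; rw [NB.add_val]
  show capN B ((⊤:ℕ∞) + a.1) = ⊤
  rw [top_add, capN]; simp

lemma NB.add_mono_right (a : NB B) : Monotone (fun x => NB.add B a x) := by
  intro x y h
  rw [← NB.coe_le_coe, NB.add_val, NB.add_val]
  exact capN_mono (add_le_add_right (NB.coe_le_coe.mpr h) _)

lemma NB.add_mono_left (c : NB B) : Monotone (fun x => NB.add B x c) := by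
  intro x y h
  rw [← NB.coe_le_coe, NB.add_val, NB.add_val]
  exact capN_mono (add_le_add_left (NB.coe_le_coe.mpr h) _)

lemma NB.min_mono_left (c : NB B) : Monotone (fun x : NB B => min x c) :=
  fun _ _ h => min_le_min h le_rfl

instance : Finite (NB B) := by
  have h : ({n : ℕ∞ | n ≤ (B:ℕ∞) ∨ n = ⊤}).Finite := by
    apply Set.Finite.subset (Set.Finite.insert (⊤:ℕ∞) ((Set.finite_Iic B).image (↑·)))
    rintro n (h | rfl)
    · rcases n with (_|n)
      · exact Set.mem_insert _ _
      · exact Set.mem_insert_of_mem _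
          ⟨n, by simpa [Set.mem_Iic] using (WithTop.coe_le_coe.mp h), rfl⟩
    · exact Set.mem_insert _ _
  exact h.to_subtype

lemma NB.exists_least (a : ℕ → NB B) : ∃ N, ∀ i, a N ≤ a i := by
  obtain ⟨x, ⟨N, rfl⟩, hx⟩ :=
    Set.Finite.exists_minimalFor id (Set.range a) (Set.toFinite _) ⟨a 0, 0, rfl⟩
  exact ⟨N, fun i => (le_total (a N) (a i)).elim id fun h => hx ⟨i, rfl⟩ h⟩

lemma NB.exists_greatest (a : ℕ → NB B) : ∃ N, ∀ i, a i ≤ a N := by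
  obtain ⟨x, ⟨N, rfl⟩, hx⟩ :=
    Set.Finite.exists_maximalFor id (Set.range a) (Set.toFinite _) ⟨a 0, 0, rfl⟩
  exact ⟨N, fun i => (le_total (a i) (a N)).elim id fun h => hx ⟨i, rfl⟩ h⟩

lemma NB.isGLB_map {f : NB B → NB B} (hf : Monotone f) (a : ℕ → NB B) (b : NB B)
    (hb : IsGLB (Set.range a) b) :
    IsGLB (Set.range fun i => f (a i)) (f b) := by
  obtain ⟨N, hN⟩ := NB.exists_least a
  have hbN : b = a N := hb.unique
    ⟨fun x hx => by obtain ⟨i, rfl⟩ := hx; exact hN i, fun x hx => hx ⟨N, rfl⟩⟩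
  rw [hbN]
  exact IsLeast.isGLB ⟨⟨N, rfl⟩, fun x hx => by obtain ⟨i, rfl⟩ := hx; exact hf (hN i)⟩

lemma NB.isLUB_map {f : NB B → NB B} (hf : Monotone f) (a : ℕ → NB B) (b : NB B)
    (hb : IsLUB (Set.range a) b) :
    IsLUB (Set.range fun i => f (a i)) (f b) := by
  obtain ⟨N, hN⟩ := NB.exists_greatest a
  have hbN : b = a N := hb.unique
    ⟨fun x hx => by obtain ⟨i, rfl⟩ := hx; exact hN i, fun x hx => hx ⟨N, rfl⟩⟩
  rw [hbN]
  exact IsGreatest.isLUB ⟨⟨N, rfl⟩, fun x hx => by obtain ⟨i, rfl⟩ := hx; exact hf (hN i)⟩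

lemma NB.exists_isLUB (A : Set (NB B)) : ∃ b, IsLUB A b := by
  have hs : sSup (Subtype.val '' A) ≤ (B:ℕ∞) ∨ sSup (Subtype.val '' A) = ⊤ := by
    by_cases h : ∃ x ∈ A, x.1 = ⊤
    · obtain ⟨x, hx, hx'⟩ := h
      have := le_sSup (Set.mem_image_of_mem Subtype.val hx)
      rw [hx'] at this
      exact Or.inr (top_unique this)
    · refine Or.inl (sSup_le ?_)
      rintro y ⟨x, hx, rfl⟩
      exact x.2.resolve_right fun ht => h ⟨x, hx, ht⟩
  refine ⟨⟨_, hs⟩, fun x hx => ?_, fun u hu => ?_⟩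
  · exact NB.coe_le_coe.mp (le_sSup (Set.mem_image_of_mem _ hx))
  · refine NB.coe_le_coe.mp (sSup_le ?_)
    rintro y ⟨x, hx, rfl⟩
    exact NB.coe_le_coe.mpr (hu hx)

lemma NB.exists_isGLB (A : Set (NB B)) : ∃ b, IsGLB A b := by
  have hs : sInf (Subtype.val '' A) ≤ (B:ℕ∞) ∨ sInf (Subtype.val '' A) = ⊤ := by
    by_cases h : ∃ x ∈ A, x.1 ≤ (B:ℕ∞)
    · obtain ⟨x, hx, hx'⟩ := h
      exact Or.inl (le_trans (sInf_le (Set.mem_image_of_mem _ hx)) hx')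
    · refine Or.inr (top_unique (le_sInf ?_))
      rintro y ⟨x, hx, rfl⟩
      exact (x.2.resolve_left fun hle => h ⟨x, hx, hle⟩).ge
  refine ⟨⟨_, hs⟩, fun x hx => ?_, fun u hu => ?_⟩
  · exact NB.coe_le_coe.mp (sInf_le (Set.mem_image_of_mem _ hx))
  · refine NB.coe_le_coe.mp (le_sInf ?_)
    rintro y ⟨x, hx, rfl⟩
    exact NB.coe_le_coe.mpr (hu hx)

/-- `(ℕ_B^∞, min, ∞, +_B, 0)` is a commutative semiring; its induced
relation `x ⊑ y ↔ ∃ z, min x z = y` coincides with `y ≤ x`; and Assumption 1 holds: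
`(ℕ_B^∞, ⊑)` is a complete lattice (every subset has a `≤`-LUB and a `≤`-GLB) with
`⊑`-bottom `∞` and `⊑`-top `0`, and both `min` and `+_B` preserve suprema of
`⊑`-increasing (`≤`-antitone) ω-chains (which are `≤`-GLBs) and infima of
`⊑`-decreasing (`≤`-monotone) ω-chains (which are `≤`-LUBs), in each argument. -/
theorem stmt6 (B : ℕ) :
    -- commutative semiring axioms (addition `min` with unit `∞`,
    -- multiplication `+_B` with unit `0`):
    (∀ a b c : NB B, min (min a b) c = min a (min b c)) ∧
    (∀ a b : NB B, min a b = min b a) ∧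
    (∀ a : NB B, min (NB.infty B) a = a) ∧
    (∀ a b c : NB B, NB.add B (NB.add B a b) c = NB.add B a (NB.add B b c)) ∧
    (∀ a b : NB B, NB.add B a b = NB.add B b a) ∧
    (∀ a : NB B, NB.add B (NB.zero B) a = a) ∧
    (∀ a : NB B, NB.add B (NB.infty B) a = NB.infty B) ∧
    (∀ a b c : NB B, NB.add B a (min b c) = min (NB.add B a b) (NB.add B a c)) ∧
    -- the induced relation `⊑` coincides with `≥`:
    (∀ x y : NB B, (∃ z, min x z = y) ↔ y ≤ x) ∧
    -- complete lattice: every subset has a least upper bound and a greatest lower bound: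
    (∀ A : Set (NB B), (∃ b, IsLUB A b) ∧ (∃ b, IsGLB A b)) ∧
    -- `⊑`-bottom `∞` and `⊑`-top `0`:
    (∀ x : NB B, x ≤ NB.infty B) ∧
    (∀ x : NB B, NB.zero B ≤ x) ∧
    -- `min` and `+_B` preserve `⊑`-suprema of `⊑`-increasing ω-chains:
    (∀ (c : NB B) (a : ℕ → NB B), Antitone a → ∀ b, IsGLB (Set.range a) b →
      IsGLB (Set.range fun i => NB.add B (a i) c) (NB.add B b c) ∧
      IsGLB (Set.range fun i => min (a i) c) (min b c)) ∧
    -- `min` and `+_B` preserve `⊑`-infima of `⊑`-decreasing ω-chains: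
    (∀ (c : NB B) (a : ℕ → NB B), Monotone a → ∀ b, IsLUB (Set.range a) b →
      IsLUB (Set.range fun i => NB.add B (a i) c) (NB.add B b c) ∧
      IsLUB (Set.range fun i => min (a i) c) (min b c)) := by
  refine ⟨fun a b c => min_assoc a b c, fun a b => min_comm a b, ?_, NB.add_assoc',
    NB.add_comm', NB.zero_add', NB.top_add', ?_, ?_, ?_, ?_, ?_, ?_, ?_⟩
  · exact fun a => min_eq_right (NB.coe_le_coe.mp le_top)
  · exact fun a b c => (NB.add_mono_right a).map_min
  · intro x y
    constructor
    · rintro ⟨z, rfl⟩; exact min_le_left x z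
    · exact fun h => ⟨y, min_eq_right h⟩
  · exact fun A => ⟨NB.exists_isLUB A, NB.exists_isGLB A⟩
  · exact fun x => NB.coe_le_coe.mp le_top
  · exact fun x => NB.coe_le_coe.mp zero_le
  · exact fun c a _ b hb =>
      ⟨NB.isGLB_map (NB.add_mono_left c) a b hb, NB.isGLB_map (NB.min_mono_left c) a b hb⟩
  · exact fun c a _ b hb =>
      ⟨NB.isLUB_map (NB.add_mono_left c) a b hb, NB.isLUB_map (NB.min_mono_left c) a b hb⟩
end

section
/- If z₀ is an accepting run from q₀ of a resource-aware Büchi word automaton, then ext q₀ ≤ val z₀ (in (ℕ∞, ≤)): the extent of the initial state is a lower bound on the minimal initial resources required by any accepting run from that state. -/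
/-- Capped subtraction on `ℕ∞`: `n ⊖ m = ∞` if both `n = ∞` and `m = ∞`, and
`n ⊖ m = n - m` (truncated subtraction) otherwise. -/
def csub (n m : ℕ∞) : ℕ∞ := if n = ⊤ ∧ m = ⊤ then ⊤ else n - m

/-- The operator whose `≤`-least fixpoint (in the pointwise order) is the value
function `val`: `Φ v z = (γ (z 0) (z 1) + v (fun n => z (n+1))) ⊖ r (z 0)`. -/
def Phi {Q : Type*} (γ : Q → Q → ℕ∞) (r : Q → ℕ∞) (v : (ℕ → Q) → ℕ∞) :
    (ℕ → Q) → ℕ∞ :=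
  fun z => csub (γ (z 0) (z 1) + v (fun n => z (n + 1))) (r (z 0))

/-- A run from `q₀`: a sequence of states starting at `q₀` all of whose steps are
actual transitions (finite weight). -/
def IsRun {Q : Type*} (γ : Q → Q → ℕ∞) (q₀ : Q) (z : ℕ → Q) : Prop :=
  z 0 = q₀ ∧ ∀ n, γ (z n) (z (n + 1)) ≠ ⊤

/-- A run is accepting iff it visits parity-2 (accepting) states infinitely often. -/
def Accepting {Q : Type*} (Ω : Q → ℕ) (z : ℕ → Q) : Prop :=
  ∀ N, ∃ n, N ≤ n ∧ Ω (z n) = 2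

/-- One step of the extent system: `q ↦ (⨅ q', (γ q q' + u q')) ⊖ r q`. -/
noncomputable def extStep {Q : Type*} (γ : Q → Q → ℕ∞) (r : Q → ℕ∞) (u : Q → ℕ∞) (q : Q) : ℕ∞ :=
  csub (⨅ q' : Q, (γ q q' + u q')) (r q)

/-- The copairing `[u₁, u₂] : Q → ℕ∞` of `u₁ : Q₁ → ℕ∞` and `u₂ : Q₂ → ℕ∞`. -/
def copair {Q : Type*} (Ω : Q → ℕ) (hΩ : ∀ q, Ω q = 1 ∨ Ω q = 2)
    (u₁ : {q // Ω q = 1} → ℕ∞) (u₂ : {q // Ω q = 2} → ℕ∞) (q : Q) : ℕ∞ :=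
  if h : Ω q = 2 then u₂ ⟨q, h⟩ else u₁ ⟨q, (hΩ q).resolve_right h⟩


section Aux

variable {Q : Type*}

lemma csub_mono {n n' m : ℕ∞} (h : n ≤ n') : csub n m ≤ csub n' m := by
  unfold csub
  split_ifs with h1 h2 h2
  · exact le_rfl
  · exact absurd ⟨top_le_iff.mp (h1.1 ▸ h), h1.2⟩ h2
  · exact le_top
  · exact tsub_le_tsub_right h m

lemma extStep_mono (γ : Q → Q → ℕ∞) (r : Q → ℕ∞) {u u' : Q → ℕ∞} (h : u ≤ u') (q : Q) :
    extStep γ r u q ≤ extStep γ r u' q :=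
  csub_mono (iInf_mono fun q' => add_le_add_right (h q') _)

lemma copair_mono (Ω : Q → ℕ) (hΩ : ∀ q, Ω q = 1 ∨ Ω q = 2)
    {u₁ u₁' : {q // Ω q = 1} → ℕ∞} {u₂ u₂' : {q // Ω q = 2} → ℕ∞}
    (h1 : u₁ ≤ u₁') (h2 : u₂ ≤ u₂') :
    copair Ω hΩ u₁ u₂ ≤ copair Ω hΩ u₁' u₂' := by
  intro q
  unfold copair
  split_ifs with h
  · exact h2 _
  · exact h1 _

lemma descend (γ : Q → Q → ℕ∞) (r : Q → ℕ∞) (val : (ℕ → Q) → ℕ∞)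
    (hval : Phi γ r val = val) (E : Q → ℕ∞) :
    ∀ (n : ℕ) (z : ℕ → Q),
      (∀ k < n, E (z k) ≤ csub (γ (z k) (z (k + 1)) + E (z (k + 1))) (r (z k))) →
      E (z n) ≤ val (fun i => z (i + n)) → E (z 0) ≤ val z := by
  intro n
  induction n with
  | zero =>
    intro z _ h
    exact h
  | succ n ih =>
    intro z hstep hend
    have h1 : E (z 1) ≤ val (fun i => z (i + 1)) := by
      refine ih (fun i => z (i + 1)) (fun k hk => hstep (k + 1) (by omega)) ?_
      exact hend
    calc E (z 0) ≤ csub (γ (z 0) (z 1) + E (z 1)) (r (z 0)) := hstep 0 (by omega)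
      _ ≤ csub (γ (z 0) (z 1) + val (fun i => z (i + 1))) (r (z 0)) :=
          csub_mono (add_le_add_right h1 _)
      _ = val z := congrFun hval z

lemma isRun_shift (γ : Q → Q → ℕ∞) {q₀ : Q} {z : ℕ → Q} (h : IsRun γ q₀ z) (m : ℕ) :
    IsRun γ (z m) (fun i => z (i + m)) := by
  constructor
  · show z (0 + m) = z m
    rw [Nat.zero_add]
  · intro k
    show γ (z (k + m)) (z (k + 1 + m)) ≠ ⊤
    rw [show k + 1 + m = (k + m) + 1 by omega]
    exact h.2 (k + m)

lemma accepting_shift (Ω : Q → ℕ) {z : ℕ → Q} (h : Accepting Ω z) (m : ℕ) :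
    Accepting Ω (fun i => z (i + m)) := by
  intro N
  obtain ⟨n, hn, h2⟩ := h (N + m)
  refine ⟨n - m, by omega, ?_⟩
  show Ω (z (n - m + m)) = 2
  rw [show n - m + m = n by omega]
  exact h2

lemma inner_bound (γ : Q → Q → ℕ∞) (r : Q → ℕ∞) (Ω : Q → ℕ)
    (hΩ : ∀ q, Ω q = 1 ∨ Ω q = 2)
    (val : (ℕ → Q) → ℕ∞) (hval : Phi γ r val = val)
    (inner : ({q // Ω q = 2} → ℕ∞) → ({q // Ω q = 1} → ℕ∞))
    (hinner : ∀ u₂, (fun q : {q // Ω q = 1} =>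
      extStep γ r (copair Ω hΩ (inner u₂) u₂) q.1) = inner u₂)
    (u₂ : {q // Ω q = 2} → ℕ∞)
    (hu : ∀ (q : {q // Ω q = 2}) (z : ℕ → Q), IsRun γ q.1 z → Accepting Ω z → u₂ q ≤ val z)
    {q₀ : Q} {z : ℕ → Q} (hrun : IsRun γ q₀ z) (hacc : Accepting Ω z) :
    copair Ω hΩ (inner u₂) u₂ (z 0) ≤ val z := by
  set E := copair Ω hΩ (inner u₂) u₂ with hE
  have hex : ∃ n, Ω (z n) = 2 := (hacc 0).imp fun n h => h.2
  apply descend γ r val hval E (Nat.find hex) z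
  · intro k hk
    have hne : ¬ Ω (z k) = 2 := Nat.find_min hex hk
    have hEk : E (z k) = extStep γ r E (z k) := by
      rw [hE]
      unfold copair
      rw [dif_neg hne]
      exact (congrFun (hinner u₂) ⟨z k, (hΩ (z k)).resolve_right hne⟩).symm
    rw [hEk]
    unfold extStep
    exact csub_mono (iInf_le _ (z (k + 1)))
  · have h2 : Ω (z (Nat.find hex)) = 2 := Nat.find_spec hex
    have hEn : E (z (Nat.find hex)) = u₂ ⟨z (Nat.find hex), h2⟩ := by
      rw [hE]; unfold copair; rw [dif_pos h2]
    rw [hEn]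
    exact hu _ _ (isRun_shift γ hrun _) (accepting_shift Ω hacc _)

end Aux

/-- if `z₀` is an accepting run from `q₀` of a resource-aware Büchi word
automaton, then `ext q₀ ≤ val z₀`: the extent of the initial state is a lower bound on
the minimal initial resources required by any accepting run from that state. -/
theorem stmt9 {Q : Type*} [Fintype Q]
    (γ : Q → Q → ℕ∞) (r : Q → ℕ∞) (Ω : Q → ℕ) (hΩ : ∀ q, Ω q = 1 ∨ Ω q = 2)
    -- `val` is the `≤`-least fixpoint (pointwise order) of `Φ`
    (val : (ℕ → Q) → ℕ∞)
    (hval : Phi γ r val = val)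
    (hvalLeast : ∀ w, Phi γ r w = w → val ≤ w)
    -- `inner u₂` is the `≤`-greatest fixpoint of `u₁ ↦ extStep [u₁, u₂]` on `Q₁`
    (inner : ({q // Ω q = 2} → ℕ∞) → ({q // Ω q = 1} → ℕ∞))
    (hinner : ∀ u₂, (fun q : {q // Ω q = 1} =>
      extStep γ r (copair Ω hΩ (inner u₂) u₂) q.1) = inner u₂)
    (hinnerGreatest : ∀ u₂ u₁, (fun q : {q // Ω q = 1} =>
      extStep γ r (copair Ω hΩ u₁ u₂) q.1) = u₁ → u₁ ≤ inner u₂)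
    -- `e₂` is the `≤`-least fixpoint of `u₂ ↦ extStep [inner u₂, u₂]` on `Q₂`
    (e₂ : {q // Ω q = 2} → ℕ∞)
    (he₂ : (fun q : {q // Ω q = 2} =>
      extStep γ r (copair Ω hΩ (inner e₂) e₂) q.1) = e₂)
    (he₂Least : ∀ u₂, (fun q : {q // Ω q = 2} =>
      extStep γ r (copair Ω hΩ (inner u₂) u₂) q.1) = u₂ → e₂ ≤ u₂)
    -- the extent is the copairing `[inner e₂, e₂]`
    (ext : Q → ℕ∞) (hext : ext = copair Ω hΩ (inner e₂) e₂)
    -- an accepting run `z₀` from `q₀`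
    (q₀ : Q) (z₀ : ℕ → Q) (hrun : IsRun γ q₀ z₀) (hacc : Accepting Ω z₀) :
    ext q₀ ≤ val z₀ := by
  classical
  let Ghom : ({q // Ω q = 2} → ℕ∞) → (({q // Ω q = 1} → ℕ∞) →o ({q // Ω q = 1} → ℕ∞)) :=
    fun u₂ => ⟨fun u₁ q => extStep γ r (copair Ω hΩ u₁ u₂) q.1,
      fun u₁ u₁' h q => extStep_mono γ r (copair_mono Ω hΩ h le_rfl) q.1⟩
  have inner_eq : ∀ u₂, inner u₂ = OrderHom.gfp (Ghom u₂) := fun u₂ =>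
    le_antisymm ((Ghom u₂).le_gfp (le_of_eq (hinner u₂).symm))
      (hinnerGreatest u₂ _ (OrderHom.map_gfp (Ghom u₂)))
  have inner_mono : ∀ {u₂ u₂' : {q // Ω q = 2} → ℕ∞}, u₂ ≤ u₂' → inner u₂ ≤ inner u₂' := by
    intro u₂ u₂' h
    rw [inner_eq u₂']
    apply (Ghom u₂').le_gfp
    calc inner u₂ = Ghom u₂ (inner u₂) := (hinner u₂).symm
      _ ≤ Ghom u₂' (inner u₂) := fun q => extStep_mono γ r (copair_mono Ω hΩ le_rfl h) q.1
  let Fhom : ({q // Ω q = 2} → ℕ∞) →o ({q // Ω q = 2} → ℕ∞) :=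
    ⟨fun u₂ q => extStep γ r (copair Ω hΩ (inner u₂) u₂) q.1,
      fun u₂ u₂' h q => extStep_mono γ r (copair_mono Ω hΩ (inner_mono h) h) q.1⟩
  have he₂lfp : e₂ ≤ OrderHom.lfp Fhom := he₂Least _ (OrderHom.map_lfp Fhom)
  let ustar : {q // Ω q = 2} → ℕ∞ :=
    fun q => ⨅ z : {z : ℕ → Q // IsRun γ q.1 z ∧ Accepting Ω z}, val z.1
  have hustar : ∀ (q : {q // Ω q = 2}) (z : ℕ → Q),
      IsRun γ q.1 z → Accepting Ω z → ustar q ≤ val z :=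
    fun q z h1 h2 => iInf_le _ (⟨z, h1, h2⟩ : {z : ℕ → Q // IsRun γ q.1 z ∧ Accepting Ω z})
  have hpre : Fhom ustar ≤ ustar := by
    intro q
    apply le_iInf
    rintro ⟨z, hr, ha⟩
    have hz1 : copair Ω hΩ (inner ustar) ustar (z 1) ≤ val (fun i => z (i + 1)) :=
      inner_bound γ r Ω hΩ val hval inner hinner ustar hustar
        (isRun_shift γ hr 1) (accepting_shift Ω ha 1)
    calc Fhom ustar q
        ≤ csub (γ q.1 (z 1) + copair Ω hΩ (inner ustar) ustar (z 1)) (r q.1) := by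
          show extStep γ r (copair Ω hΩ (inner ustar) ustar) q.1 ≤ _
          unfold extStep
          exact csub_mono (iInf_le _ (z 1))
      _ ≤ csub (γ q.1 (z 1) + val (fun i => z (i + 1))) (r q.1) :=
          csub_mono (add_le_add_right hz1 _)
      _ = csub (γ (z 0) (z 1) + val (fun i => z (i + 1))) (r (z 0)) := by rw [hr.1]
      _ = val z := congrFun hval z
  have hlfp_le : OrderHom.lfp Fhom ≤ ustar := Fhom.lfp_le hpre
  have he₂u : ∀ (q : {q // Ω q = 2}) (z : ℕ → Q),
      IsRun γ q.1 z → Accepting Ω z → e₂ q ≤ val z :=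
    fun q z h1 h2 => le_trans (he₂lfp q) (le_trans (hlfp_le q) (hustar q z h1 h2))
  rw [hext, ← hrun.1]
  exact inner_bound γ r Ω hΩ val hval inner hinner e₂ he₂u hrun hacc
end

section
/- Suppose z is a run of a resource-aware Büchi word automaton and ρ : ℕ → ℕ is an annotation such that for every n: ρ n ≥ ext (z n) (in particular ext (z n) ≠ ∞), and ρ n + r (z n) ≥ γ (z n) (z (n+1)) + ρ (n+1) (the incoming annotation plus the offset gained in z n covers the resources consumed by the step plus the outgoing annotation, as an inequality in ℕ∞). Then val z ≤ ρ 0. -/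
private lemma csub_mono_left {a a' b : ℕ∞} (h : a ≤ a') : csub a b ≤ csub a' b := by
  unfold csub
  split_ifs with h1 h2 h2
  · exact le_rfl
  · exact absurd ⟨top_le_iff.mp (h1.1 ▸ h), h1.2⟩ h2
  · exact le_top
  · exact tsub_le_tsub_right h _

private lemma phi_mono {Q : Type*} (γ : Q → Q → ℕ∞) (r : Q → ℕ∞) :
    Monotone (Phi γ r) := by
  intro v v' hv y
  exact csub_mono_left (add_le_add_right (hv _) _)

/-- if `z` is a run and `ρ : ℕ → ℕ` an annotation with `ρ n ≥ ext (z n)`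
(in particular `ext (z n) ≠ ∞`) and `ρ n + r (z n) ≥ γ (z n) (z (n+1)) + ρ (n+1)` for
every `n`, then `val z ≤ ρ 0`. -/
theorem stmt10 {Q : Type*} [Fintype Q]
    (γ : Q → Q → ℕ∞) (r : Q → ℕ∞) (Ω : Q → ℕ) (hΩ : ∀ q, Ω q = 1 ∨ Ω q = 2)
    -- `val` is the `≤`-least fixpoint (pointwise order) of `Φ`
    (val : (ℕ → Q) → ℕ∞)
    (hval : Phi γ r val = val)
    (hvalLeast : ∀ w, Phi γ r w = w → val ≤ w)
    -- `inner u₂` is the `≤`-greatest fixpoint of `u₁ ↦ extStep [u₁, u₂]` on `Q₁`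
    (inner : ({q // Ω q = 2} → ℕ∞) → ({q // Ω q = 1} → ℕ∞))
    (hinner : ∀ u₂, (fun q : {q // Ω q = 1} =>
      extStep γ r (copair Ω hΩ (inner u₂) u₂) q.1) = inner u₂)
    (hinnerGreatest : ∀ u₂ u₁, (fun q : {q // Ω q = 1} =>
      extStep γ r (copair Ω hΩ u₁ u₂) q.1) = u₁ → u₁ ≤ inner u₂)
    -- `e₂` is the `≤`-least fixpoint of `u₂ ↦ extStep [inner u₂, u₂]` on `Q₂`
    (e₂ : {q // Ω q = 2} → ℕ∞)
    (he₂ : (fun q : {q // Ω q = 2} =>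
      extStep γ r (copair Ω hΩ (inner e₂) e₂) q.1) = e₂)
    (he₂Least : ∀ u₂, (fun q : {q // Ω q = 2} =>
      extStep γ r (copair Ω hΩ (inner u₂) u₂) q.1) = u₂ → e₂ ≤ u₂)
    -- the extent is the copairing `[inner e₂, e₂]`
    (ext : Q → ℕ∞) (hext : ext = copair Ω hΩ (inner e₂) e₂)
    -- a run `z` annotated by `ρ`
    (z : ℕ → Q) (hrun : IsRun γ (z 0) z)
    (ρ : ℕ → ℕ)
    (hρext : ∀ n, ext (z n) ≤ (ρ n : ℕ∞))
    (hρstep : ∀ n, γ (z n) (z (n + 1)) + (ρ (n + 1) : ℕ∞) ≤ (ρ n : ℕ∞) + r (z n)) :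
    val z ≤ (ρ 0 : ℕ∞) := by
  classical
  set w : (ℕ → Q) → ℕ∞ :=
    fun y => ⨅ (n : ℕ) (_ : y = fun k => z (n + k)), (ρ n : ℕ∞) with hw
  have hpre : Phi γ r w ≤ w := by
    intro y
    refine le_iInf fun n => le_iInf fun hy => ?_
    subst hy
    have hwtail : w (fun k => z (n + (k + 1))) ≤ (ρ (n + 1) : ℕ∞) := by
      have he : (fun k => z (n + (k + 1))) = fun k => z ((n + 1) + k) := by
        funext k; ring_nf
      calc w (fun k => z (n + (k + 1)))
          ≤ ⨅ (_ : (fun k => z (n + (k + 1))) = fun k => z ((n + 1) + k)),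
              (ρ (n + 1) : ℕ∞) := iInf_le _ (n + 1)
        _ ≤ (ρ (n + 1) : ℕ∞) := iInf_le _ he
    have hγ : γ (z (n + 0)) (z (n + 1)) ≠ ⊤ := by
      simpa using hrun.2 n
    have hle : γ (z (n + 0)) (z (n + 1)) + w (fun k => z (n + (k + 1)))
        ≤ (ρ n : ℕ∞) + r (z (n + 0)) := by
      refine le_trans (add_le_add_right hwtail _) ?_
      simpa using hρstep n
    have hne : γ (z (n + 0)) (z (n + 1)) + w (fun k => z (n + (k + 1))) ≠ ⊤ := by
      refine WithTop.add_ne_top.mpr ⟨hγ, ?_⟩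
      exact ne_top_of_le_ne_top (WithTop.natCast_ne_top _) hwtail
    show csub (γ (z (n + 0)) (z (n + 1)) + w (fun k => z (n + (k + 1))))
        (r (z (n + 0))) ≤ (ρ n : ℕ∞)
    rw [csub, if_neg (fun h => hne h.1)]
    exact tsub_le_iff_right.mpr hle
  have hmono := phi_mono γ r
  let Φh : ((ℕ → Q) → ℕ∞) →o ((ℕ → Q) → ℕ∞) := ⟨Phi γ r, hmono⟩
  have h1 : val ≤ OrderHom.lfp Φh := hvalLeast _ (Φh.map_lfp)
  have h2 : OrderHom.lfp Φh ≤ w := OrderHom.lfp_le Φh hpre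
  have hz : z = fun k => z (0 + k) := by funext k; simp
  calc val z ≤ w z := le_trans (h1 z) (h2 z)
    _ ≤ ⨅ (_ : z = fun k => z (0 + k)), (ρ 0 : ℕ∞) := iInf_le _ 0
    _ ≤ (ρ 0 : ℕ∞) := iInf_le _ hz
end

section
/- For every state q of a B-bounded resource-aware Büchi word automaton with ext q ≠ ∞, there exists an accepting run z from q with val z = ext q; that is, the extent is attained by an optimal accepting run. -/
/-- Capped addition on `ℕ∞`: `m +_B n = m + n` if `m + n ≤ B`, and `∞` otherwise. -/
def baddB (B : ℕ) (m n : ℕ∞) : ℕ∞ := if m + n ≤ (B : ℕ∞) then m + n else ⊤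

/-- The operator whose `≤`-least fixpoint (in the pointwise order) is the value
function `val` (B-bounded version):
`Φ v z = (γ (z 0) (z 1) +_B v (fun n => z (n+1))) ⊖ r (z 0)`. -/
def PhiB {Q : Type*} (B : ℕ) (γ : Q → Q → ℕ∞) (r : Q → ℕ∞) (v : (ℕ → Q) → ℕ∞) :
    (ℕ → Q) → ℕ∞ :=
  fun z => csub (baddB B (γ (z 0) (z 1)) (v (fun n => z (n + 1)))) (r (z 0))

/-- One step of the extent system (B-bounded version):
`q ↦ (⨅ q', (γ q q' +_B u q')) ⊖ r q`. -/
noncomputable def extStepB {Q : Type*} (B : ℕ) (γ : Q → Q → ℕ∞) (r : Q → ℕ∞)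
    (u : Q → ℕ∞) (q : Q) : ℕ∞ :=
  csub (⨅ q' : Q, baddB B (γ q q') (u q')) (r q)

lemma csub_top_left (m : ℕ∞) : csub ⊤ m = ⊤ := by
  unfold csub
  by_cases h : m = ⊤
  · simp [h]
  · rw [if_neg (by simp [h])]
    cases m with
    | top => simp at h
    | coe a => rfl

lemma csub_mono_left_s11 {n n' : ℕ∞} (m : ℕ∞) (h : n ≤ n') : csub n m ≤ csub n' m := by
  by_cases hn' : n' = ⊤
  · simp [hn', csub_top_left]
  · have hn : n ≠ ⊤ := fun e => hn' (top_le_iff.mp (e ▸ h))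
    unfold csub
    rw [if_neg (by simp [hn]), if_neg (by simp [hn'])]
    exact tsub_le_tsub_right h m

lemma csub_ne_top {n m : ℕ∞} (h : n ≠ ⊤) : csub n m ≠ ⊤ := by
  unfold csub
  rw [if_neg (by simp [h])]
  intro e
  exact h (top_le_iff.mp (e ▸ tsub_le_self))

lemma csub_eq_top {n m : ℕ∞} (h : csub n m = ⊤) : n = ⊤ := by
  by_contra hn; exact csub_ne_top hn h

lemma baddB_mono_right (B : ℕ) (c : ℕ∞) {x y : ℕ∞} (h : x ≤ y) :
    baddB B c x ≤ baddB B c y := by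
  unfold baddB
  by_cases hy : c + y ≤ (B : ℕ∞)
  · rw [if_pos hy, if_pos (le_trans (add_le_add (le_refl c) h) hy)]
    exact add_le_add (le_refl c) h
  · rw [if_neg hy]; exact le_top

lemma baddB_le_or_top (B : ℕ) (c x : ℕ∞) : baddB B c x ≤ (B : ℕ∞) ∨ baddB B c x = ⊤ := by
  unfold baddB
  by_cases h : c + x ≤ (B : ℕ∞)
  · left; rwa [if_pos h]
  · right; rw [if_neg h]

lemma baddB_ne_top {B : ℕ} {c x : ℕ∞} (h : baddB B c x ≠ ⊤) :
    c ≠ ⊤ ∧ x ≠ ⊤ ∧ baddB B c x = c + x := by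
  unfold baddB at h ⊢
  by_cases hle : c + x ≤ (B : ℕ∞)
  · have hcx : c + x ≠ ⊤ := fun e => by
      rw [e] at hle
      simp at hle
    exact ⟨fun e => hcx (by simp [e]), fun e => hcx (by simp [e]), if_pos hle⟩
  · exact absurd (if_neg hle) h

lemma baddB_top_right (B : ℕ) (c : ℕ∞) : baddB B c ⊤ = ⊤ := by
  unfold baddB
  rw [if_neg]
  simp

lemma enat_eq_top_of_forall (x : ℕ∞) (h : ∀ n : ℕ, (n : ℕ∞) ≤ x) : x = ⊤ := by
  cases x with
  | top => rfl
  | coe a =>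
    have := h (a + 1)
    norm_cast at this
    omega

lemma enat_sInf_mem {S : Set ℕ∞} (h : S.Nonempty) : sInf S ∈ S := csInf_mem h

lemma enat_sup_dichotomy (a : ℕ → ℕ∞) (ha : Monotone a) :
    (∃ k, a k = ⨆ j, a j) ∨ ((⨆ j, a j) = ⊤ ∧ ∀ n : ℕ, ∃ k, (n : ℕ∞) < a k) := by
  by_cases hmax : ∃ k, ∀ j, a j ≤ a k
  · obtain ⟨k, hk⟩ := hmax
    left
    exact ⟨k, le_antisymm (le_iSup a k) (iSup_le hk)⟩
  · push_neg at hmax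
    have hub : ∀ n : ℕ, ∃ k, (n : ℕ∞) < a k := by
      intro n
      induction n with
      | zero =>
        obtain ⟨j, hj⟩ := hmax 0
        exact ⟨j, lt_of_le_of_lt zero_le hj⟩
      | succ n ih =>
        obtain ⟨k, hk⟩ := ih
        obtain ⟨j, hj⟩ := hmax k
        refine ⟨j, ?_⟩
        have h1 : (n : ℕ∞) + 1 ≤ a k := Order.add_one_le_of_lt hk
        have : (n : ℕ∞) + 1 < a j := lt_of_le_of_lt h1 hj
        exact_mod_cast this
    right
    refine ⟨?_, hub⟩
    apply enat_eq_top_of_forall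
    intro n
    obtain ⟨k, hk⟩ := hub n
    exact le_trans hk.le (le_iSup a k)

lemma csub_baddB_iSup (B : ℕ) (c rr : ℕ∞) (a : ℕ → ℕ∞) (ha : Monotone a) :
    csub (baddB B c (⨆ k, a k)) rr = ⨆ k, csub (baddB B c (a k)) rr := by
  have hmono : Monotone fun x => csub (baddB B c x) rr := fun x y h =>
    csub_mono_left_s11 rr (baddB_mono_right B c h)
  rcases enat_sup_dichotomy a ha with ⟨k₀, hk₀⟩ | ⟨htop, hub⟩
  · apply le_antisymm
    · rw [← hk₀]
      exact le_iSup (fun k => csub (baddB B c (a k)) rr) k₀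
    · exact iSup_le fun k => hmono (le_iSup a k)
  · rw [htop, baddB_top_right, csub_top_left]
    symm
    rw [eq_top_iff]
    by_cases hc : c = ⊤
    · refine le_trans ?_ (le_iSup _ 0)
      rw [hc]
      have : baddB B ⊤ (a 0) = ⊤ := by
        unfold baddB
        rw [if_neg]
        simp
      rw [this, csub_top_left]
    · obtain ⟨k, hk⟩ := hub B
      refine le_trans ?_ (le_iSup _ k)
      have : baddB B c (a k) = ⊤ := by
        unfold baddB
        rw [if_neg]
        intro hle
        have : (B : ℕ∞) < c + a k := lt_of_lt_of_le hk (le_add_self)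
        exact absurd hle (not_le.mpr this)
      rw [this, csub_top_left]

/-- A monotone sequence of functions into `[0,B] ∪ {⊤}` stabilizes. -/
lemma stabilize {I : Type*} [Fintype I] (B : ℕ) (c : ℕ → I → ℕ∞)
    (hm : ∀ k, c k ≤ c (k + 1))
    (hV : ∀ k i, c k i ≤ (B : ℕ∞) ∨ c k i = ⊤) :
    ∃ K, c (K + 1) = c K := by
  classical
  by_contra hcon
  push_neg at hcon
  set φ : ℕ∞ → ℕ := fun x => if x = ⊤ then B + 1 else x.toNat with hφ
  have hφle : ∀ x, x ≤ (B:ℕ∞) ∨ x = ⊤ → φ x ≤ B + 1 := by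
    rintro x (hx | hx)
    · simp only [hφ]
      split
      · exact le_rfl
      · have : x.toNat ≤ B := by
          have := ENat.toNat_le_toNat hx (by simp : (B:ℕ∞) ≠ ⊤)
          simpa using this
        omega
    · simp [hφ, hx]
  have hφmono : ∀ x y : ℕ∞, x ≤ (B:ℕ∞) ∨ x = ⊤ → x ≤ y → φ x ≤ φ y := by
    rintro x y hx hxy
    by_cases hy : y = ⊤
    · rw [hφ]
      simp only [hy, if_pos rfl]
      exact hφle x hx
    · have hxt : x ≠ ⊤ := fun e => hy (top_le_iff.mp (e ▸ hxy))
      simp only [hφ, if_neg hy, if_neg hxt]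
      have := ENat.toNat_le_toNat hxy hy
      simpa using this
  have hφstrict : ∀ x y : ℕ∞, x ≤ (B:ℕ∞) ∨ x = ⊤ → x < y → φ x < φ y := by
    rintro x y hx hxy
    have hxt : x ≠ ⊤ := fun e => absurd hxy (by simp [e])
    have hxB : x ≤ (B:ℕ∞) := hx.resolve_right hxt
    have hxN : x.toNat ≤ B := by
      have := ENat.toNat_le_toNat hxB (by simp : (B:ℕ∞) ≠ ⊤)
      simpa using this
    by_cases hy : y = ⊤
    · simp only [hφ, if_pos hy, if_neg hxt]
      omega
    · simp only [hφ, if_neg hy, if_neg hxt]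
      have h1 : (x.toNat : ℕ∞) = x := ENat.coe_toNat hxt
      have h2 : (y.toNat : ℕ∞) = y := ENat.coe_toNat hy
      rw [← h1, ← h2] at hxy
      exact_mod_cast hxy
  set N : ℕ → ℕ := fun k => ∑ i : I, φ (c k i) with hN
  have hNlt : ∀ k, N k < N (k + 1) := by
    intro k
    have hne : c (k+1) ≠ c k := hcon k
    have hex : ∃ i, c k i < c (k+1) i := by
      by_contra hno
      push_neg at hno
      exact hne (funext fun i => le_antisymm (hno i) (hm k i))
    obtain ⟨i₀, hi₀⟩ := hex
    apply Finset.sum_lt_sum (s := Finset.univ)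
    · intro i _
      exact hφmono _ _ (hV k i) (hm k i)
    · exact ⟨i₀, Finset.mem_univ i₀, hφstrict _ _ (hV k i₀) hi₀⟩
  have hNbd : ∀ k, N k ≤ Fintype.card I * (B + 1) := by
    intro k
    calc N k ≤ ∑ _i : I, (B+1) := Finset.sum_le_sum fun i _ => hφle _ (hV k i)
    _ = Fintype.card I * (B+1) := by
      rw [Finset.sum_const, smul_eq_mul, Finset.card_univ]
  have hsm : StrictMono N := strictMono_nat_of_lt_succ hNlt
  have h1 : Fintype.card I * (B+1) + 1 ≤ N (Fintype.card I * (B+1) + 1) := hsm.le_apply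
  have h2 := hNbd (Fintype.card I * (B+1) + 1)
  omega

/-- for every state `q` of a B-bounded resource-aware Büchi word
automaton with `ext q ≠ ∞`, there exists an accepting run `z` from `q` with
`val z = ext q`: the extent is attained by an optimal accepting run. -/
theorem stmt11 {Q : Type*} [Fintype Q]
    (γ : Q → Q → ℕ∞) (r : Q → ℕ∞) (Ω : Q → ℕ) (hΩ : ∀ q, Ω q = 1 ∨ Ω q = 2)
    -- B-boundedness: every finite value of `γ` and of `r` is at most `B`
    (B : ℕ)
    (hγB : ∀ q q', γ q q' ≠ ⊤ → γ q q' ≤ (B : ℕ∞))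
    (hrB : ∀ q, r q ≠ ⊤ → r q ≤ (B : ℕ∞))
    -- `val` is the `≤`-least fixpoint (pointwise order) of `Φ`
    (val : (ℕ → Q) → ℕ∞)
    (hval : PhiB B γ r val = val)
    (hvalLeast : ∀ w, PhiB B γ r w = w → val ≤ w)
    -- `inner u₂` is the `≤`-greatest fixpoint of `u₁ ↦ extStep [u₁, u₂]` on `Q₁`
    (inner : ({q // Ω q = 2} → ℕ∞) → ({q // Ω q = 1} → ℕ∞))
    (hinner : ∀ u₂, (fun q : {q // Ω q = 1} =>
      extStepB B γ r (copair Ω hΩ (inner u₂) u₂) q.1) = inner u₂)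
    (hinnerGreatest : ∀ u₂ u₁, (fun q : {q // Ω q = 1} =>
      extStepB B γ r (copair Ω hΩ u₁ u₂) q.1) = u₁ → u₁ ≤ inner u₂)
    -- `e₂` is the `≤`-least fixpoint of `u₂ ↦ extStep [inner u₂, u₂]` on `Q₂`
    (e₂ : {q // Ω q = 2} → ℕ∞)
    (he₂ : (fun q : {q // Ω q = 2} =>
      extStepB B γ r (copair Ω hΩ (inner e₂) e₂) q.1) = e₂)
    (he₂Least : ∀ u₂, (fun q : {q // Ω q = 2} =>
      extStepB B γ r (copair Ω hΩ (inner u₂) u₂) q.1) = u₂ → e₂ ≤ u₂)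
    -- the extent is the copairing `[inner e₂, e₂]`
    (ext : Q → ℕ∞) (hext : ext = copair Ω hΩ (inner e₂) e₂)
    (q : Q) (hq : ext q ≠ ⊤) :
    ∃ z : ℕ → Q, IsRun γ q z ∧ Accepting Ω z ∧ val z = ext q := by
  classical
  -- `copair` computation rules
  have hcop2 : ∀ (u₁ : {q // Ω q = 1} → ℕ∞) (u₂ : {q // Ω q = 2} → ℕ∞) (x : Q)
      (h : Ω x = 2), copair Ω hΩ u₁ u₂ x = u₂ ⟨x, h⟩ := by
    intro u₁ u₂ x h
    exact dif_pos h
  have hcop1 : ∀ (u₁ : {q // Ω q = 1} → ℕ∞) (u₂ : {q // Ω q = 2} → ℕ∞) (x : Q)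
      (h : Ω x = 1), copair Ω hΩ u₁ u₂ x = u₁ ⟨x, h⟩ := by
    intro u₁ u₂ x h
    exact dif_neg (by omega)
  have h_copair_mono : ∀ (u₁ u₁' : {q // Ω q = 1} → ℕ∞) (u₂ u₂' : {q // Ω q = 2} → ℕ∞),
      u₁ ≤ u₁' → u₂ ≤ u₂' → ∀ x, copair Ω hΩ u₁ u₂ x ≤ copair Ω hΩ u₁' u₂' x := by
    intro u₁ u₁' u₂ u₂' h1 h2 x
    by_cases h : Ω x = 2
    · rw [hcop2 _ _ _ h, hcop2 _ _ _ h]; exact h2 _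
    · have h' := (hΩ x).resolve_right h
      rw [hcop1 _ _ _ h', hcop1 _ _ _ h']; exact h1 _
  have hS_mono : ∀ u u' : Q → ℕ∞, (∀ y, u y ≤ u' y) →
      ∀ x, extStepB B γ r u x ≤ extStepB B γ r u' x := by
    intro u u' h x
    unfold extStepB
    refine csub_mono_left_s11 _ (le_iInf fun q' => ?_)
    exact le_trans (iInf_le _ q') (baddB_mono_right B _ (h q'))
  have hS_V : ∀ (u : Q → ℕ∞) x, extStepB B γ r u x ≤ (B : ℕ∞) ∨ extStepB B γ r u x = ⊤ := by
    intro u x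
    unfold extStepB
    set m := ⨅ q' : Q, baddB B (γ x q') (u q') with hm
    by_cases hmt : m = ⊤
    · right; rw [hmt]; exact csub_top_left _
    · left
      have hex : ∃ q', baddB B (γ x q') (u q') ≠ ⊤ := by
        by_contra hno
        push_neg at hno
        exact hmt (by rw [hm]; exact iInf_eq_top.mpr hno)
      obtain ⟨q', hq'⟩ := hex
      have hmB : m ≤ (B : ℕ∞) :=
        le_trans (iInf_le _ q') ((baddB_le_or_top B _ _).resolve_right hq')
      have : csub m (r x) ≤ m := by
        unfold csub
        rw [if_neg (by simp [hmt])]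
        exact tsub_le_self
      exact le_trans this hmB
  have hS_ext : ∀ x, extStepB B γ r ext x = ext x := by
    intro x
    rw [hext]
    by_cases h : Ω x = 2
    · rw [hcop2 _ _ _ h]
      exact congrFun he₂ ⟨x, h⟩
    · have h' := (hΩ x).resolve_right h
      rw [hcop1 _ _ _ h']
      exact congrFun (hinner e₂) ⟨x, h'⟩
  -- post-fixpoints are below `inner`
  have h_postfix_le_inner : ∀ (u₂ : {q // Ω q = 2} → ℕ∞) (v : {q // Ω q = 1} → ℕ∞),
      (∀ x, v x ≤ extStepB B γ r (copair Ω hΩ v u₂) x.1) → v ≤ inner u₂ := by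
    intro u₂ v hv
    set Fop : ({q // Ω q = 1} → ℕ∞) → ({q // Ω q = 1} → ℕ∞) :=
      fun w x => extStepB B γ r (copair Ω hΩ w u₂) x.1 with hFop
    have hFmono : ∀ w w', w ≤ w' → Fop w ≤ Fop w' := by
      intro w w' h x
      exact hS_mono _ _ (h_copair_mono _ _ _ _ h (le_refl u₂)) x.1
    have hchain : ∀ k, Fop^[k] v ≤ Fop^[k + 1] v := by
      intro k
      induction k with
      | zero =>
        simp only [Function.iterate_zero_apply, Function.iterate_one]
        exact fun x => hv x
      | succ k ih =>
        rw [Function.iterate_succ_apply', Function.iterate_succ_apply']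
        exact hFmono _ _ ih
    have hle0 : ∀ k, v ≤ Fop^[k] v := by
      intro k
      induction k with
      | zero => simp
      | succ k ih => exact le_trans ih (hchain k)
    obtain ⟨K, hK⟩ := stabilize B (fun k => Fop^[k + 1] v) (fun k => hchain (k + 1))
      (by
        intro k x
        show Fop^[k+1] v x ≤ (B:ℕ∞) ∨ Fop^[k+1] v x = ⊤
        rw [Function.iterate_succ_apply' Fop k v]
        exact hS_V _ x.1)
    have hfix : (fun x : {q // Ω q = 1} =>
        extStepB B γ r (copair Ω hΩ (Fop^[K + 1] v) u₂) x.1) = Fop^[K + 1] v := by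
      show Fop (Fop^[K + 1] v) = Fop^[K + 1] v
      rw [← Function.iterate_succ_apply' Fop (K+1) v]
      exact hK
    exact le_trans (hle0 (K + 1)) (hinnerGreatest u₂ _ hfix)
  have h_inner_mono : ∀ u₂ u₂', u₂ ≤ u₂' → inner u₂ ≤ inner u₂' := by
    intro u₂ u₂' h
    apply h_postfix_le_inner u₂' (inner u₂)
    intro x
    have h1 : inner u₂ x = extStepB B γ r (copair Ω hΩ (inner u₂) u₂) x.1 :=
      (congrFun (hinner u₂) x).symm
    rw [h1]
    exact hS_mono _ _ (h_copair_mono _ _ _ _ (le_refl _) h) x.1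
  -- Kleene approximants of `e₂`
  set Top : ({q // Ω q = 2} → ℕ∞) → ({q // Ω q = 2} → ℕ∞) :=
    fun u₂ x => extStepB B γ r (copair Ω hΩ (inner u₂) u₂) x.1 with hTop
  have hTmono : ∀ w w', w ≤ w' → Top w ≤ Top w' := by
    intro w w' h x
    exact hS_mono _ _ (h_copair_mono _ _ _ _ (h_inner_mono _ _ h) h) x.1
  set u : ℕ → ({q // Ω q = 2} → ℕ∞) := fun k => Top^[k] ⊥ with hu
  have hu_chain : ∀ k, u k ≤ u (k + 1) := by
    intro k
    induction k with
    | zero => simp [hu]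
    | succ k ih =>
      show Top^[k+1] ⊥ ≤ Top^[k+1+1] ⊥
      rw [Function.iterate_succ_apply', Function.iterate_succ_apply']
      exact hTmono _ _ ih
  have hu_le : ∀ k, u k ≤ e₂ := by
    intro k
    induction k with
    | zero => simp [hu]
    | succ k ih =>
      show Top^[k+1] ⊥ ≤ e₂
      rw [Function.iterate_succ_apply']
      calc Top (Top^[k] ⊥) ≤ Top e₂ := hTmono _ _ ih
      _ = e₂ := he₂
  obtain ⟨K, hK⟩ := stabilize B u hu_chain
    (by
      intro k x
      cases k with
      | zero => left; simp [hu]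
      | succ k =>
        show Top^[k+1] ⊥ x ≤ (B:ℕ∞) ∨ Top^[k+1] ⊥ x = ⊤
        rw [Function.iterate_succ_apply' Top k ⊥]
        exact hS_V _ x.1)
  have hKfix : Top (u K) = u K := by
    calc Top (u K) = Top^[K+1] ⊥ := (Function.iterate_succ_apply' Top K ⊥).symm
    _ = u (K + 1) := rfl
    _ = u K := hK
  have huK : u K = e₂ := le_antisymm (hu_le K) (he₂Least _ hKfix)
    -- shift machinery
  set sh : (ℕ → Q) → ℕ → (ℕ → Q) := fun z i n => z (i + n) with hsh
  have hsh_acc : ∀ z i, Accepting Ω z → Accepting Ω (sh z i) := by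
    intro z i hz N
    obtain ⟨n, hn1, hn2⟩ := hz (N + i)
    refine ⟨n - i, by omega, ?_⟩
    show Ω (z (i + (n - i))) = 2
    rw [show i + (n - i) = n by omega]
    exact hn2
  have hsh_succ : ∀ (z : ℕ → Q) (i : ℕ), (fun n => sh z i (n + 1)) = sh z (i + 1) := by
    intro z i
    funext n
    show z (i + (n + 1)) = z (i + 1 + n)
    congr 1
    omega
  have hval_unfold : ∀ y : ℕ → Q,
      val y = csub (baddB B (γ (y 0) (y 1)) (val (fun n => y (n + 1)))) (r (y 0)) :=
    fun y => (congrFun hval y).symm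
  -- the stretch lemma: propagate a bound backwards through a `Q₁`-stretch
  have h_stretch : ∀ u₂' : {q // Ω q = 2} → ℕ∞,
      (∀ z, Accepting Ω z → ∀ h2 : Ω (z 0) = 2, u₂' ⟨z 0, h2⟩ ≤ val z) →
      ∀ z, Accepting Ω z → copair Ω hΩ (inner u₂') u₂' (z 0) ≤ val z := by
    intro u₂' H z hz
    obtain ⟨n₁, _, hn₁⟩ := hz 0
    have hex : ∃ n, Ω (z n) = 2 := ⟨n₁, hn₁⟩
    have hn₀2 : Ω (z (Nat.find hex)) = 2 := Nat.find_spec hex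
    set n₀ := Nat.find hex with hn₀def
    have hmin : ∀ i, i < n₀ → Ω (z i) = 1 := fun i hi =>
      (hΩ _).resolve_right (Nat.find_min hex hi)
    have key : ∀ d, copair Ω hΩ (inner u₂') u₂' (z (n₀ - d)) ≤ val (sh z (n₀ - d)) := by
      intro d
      induction d with
      | zero =>
        simp only [Nat.sub_zero]
        rw [hcop2 _ _ _ hn₀2]
        have h2' : Ω ((sh z n₀) 0) = 2 := hn₀2
        exact H (sh z n₀) (hsh_acc z n₀ hz) h2'
      | succ d ih =>
        by_cases hd : n₀ ≤ d
        · rw [show n₀ - (d + 1) = n₀ - d by omega]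
          exact ih
        · push_neg at hd
          set i := n₀ - (d + 1) with hi
          have hi1 : i + 1 = n₀ - d := by omega
          have hilt : i < n₀ := by omega
          have h1 : Ω (z i) = 1 := hmin i hilt
          rw [hcop1 _ _ _ h1]
          refine le_trans (le_of_eq (congrFun (hinner u₂') ⟨z i, h1⟩).symm) ?_
          show extStepB B γ r (copair Ω hΩ (inner u₂') u₂') (z i) ≤ val (sh z i)
          unfold extStepB
          refine le_trans (csub_mono_left_s11 _ (iInf_le _ (z (i + 1)))) ?_
          have hIH : copair Ω hΩ (inner u₂') u₂' (z (i + 1)) ≤ val (sh z (i + 1)) := by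
            rw [hi1]
            exact ih
          refine le_trans (csub_mono_left_s11 _ (baddB_mono_right B _ hIH)) ?_
          rw [hval_unfold (sh z i), hsh_succ z i]
          exact le_rfl
    have hfin := key n₀
    rw [Nat.sub_self n₀] at hfin
    have hz0 : sh z 0 = z := funext fun n => congrArg z (Nat.zero_add n)
    rwa [hz0] at hfin
  -- each approximant bounds accepting runs from below
  have h_good : ∀ k, ∀ z, Accepting Ω z → copair Ω hΩ (inner (u k)) (u k) (z 0) ≤ val z := by
    intro k
    induction k with
    | zero =>
      apply h_stretch
      intro z hz h2
      exact bot_le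
    | succ k ih =>
      apply h_stretch
      intro z hz h2
      have hu1 : u (k + 1) ⟨z 0, h2⟩ =
          extStepB B γ r (copair Ω hΩ (inner (u k)) (u k)) (z 0) := by
        show Top^[k+1] ⊥ ⟨z 0, h2⟩ = _
        rw [Function.iterate_succ_apply' Top k ⊥]
      rw [hu1]
      unfold extStepB
      refine le_trans (csub_mono_left_s11 _ (iInf_le _ (z 1))) ?_
      have hIH : copair Ω hΩ (inner (u k)) (u k) (z 1) ≤ val (sh z 1) :=
        ih (sh z 1) (hsh_acc z 1 hz)
      refine le_trans (csub_mono_left_s11 _ (baddB_mono_right B _ hIH)) ?_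
      rw [hval_unfold z]
      rw [show (fun n => z (n + 1)) = sh z 1 from funext fun n => congrArg z (by omega)]
  have h_lower : ∀ z, Accepting Ω z → ext (z 0) ≤ val z := by
    intro z hz
    have h := h_good K z hz
    rw [huK] at h
    rw [hext]
    exact h
    -- iterates of Φ and their sup
  have hPhi_mono : ∀ v v' : (ℕ → Q) → ℕ∞, v ≤ v' → ∀ y, PhiB B γ r v y ≤ PhiB B γ r v' y := by
    intro v v' h y
    unfold PhiB
    exact csub_mono_left_s11 _ (baddB_mono_right B _ (h _))
  set Phit : ℕ → (ℕ → Q) → ℕ∞ := fun k => (PhiB B γ r)^[k] (fun _ => 0) with hPhit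
  have hstep_phit : ∀ k, Phit (k + 1) = PhiB B γ r (Phit k) := fun k =>
    Function.iterate_succ_apply' (PhiB B γ r) k _
  have hPhit_mono : ∀ k, Phit k ≤ Phit (k + 1) := by
    intro k
    induction k with
    | zero => intro y; exact zero_le
    | succ k ih =>
      rw [hstep_phit k, hstep_phit (k + 1)]
      exact fun y => hPhi_mono _ _ ih y
  set U : (ℕ → Q) → ℕ∞ := fun y => ⨆ k, Phit k y with hU
  have hU_fix : PhiB B γ r U = U := by
    funext y
    show csub (baddB B (γ (y 0) (y 1)) (U (fun n => y (n + 1)))) (r (y 0)) = U y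
    have hmono : Monotone fun k => Phit k (fun n => y (n + 1)) :=
      monotone_nat_of_le_succ fun k => hPhit_mono k _
    have h1 : U (fun n => y (n + 1)) = ⨆ k, Phit k (fun n => y (n + 1)) := rfl
    rw [h1, csub_baddB_iSup B _ _ _ hmono]
    apply le_antisymm
    · apply iSup_le
      intro k
      have h2 : csub (baddB B (γ (y 0) (y 1)) (Phit k (fun n => y (n + 1)))) (r (y 0))
          = Phit (k + 1) y := by
        rw [hstep_phit k]
        rfl
      rw [h2]
      exact le_iSup (fun k => Phit k y) (k + 1)
    · apply iSup_le
      intro k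
      have h2 : Phit (k + 1) y =
          csub (baddB B (γ (y 0) (y 1)) (Phit k (fun n => y (n + 1)))) (r (y 0)) := by
        rw [hstep_phit k]
        rfl
      refine le_trans (hPhit_mono k y) (le_trans (le_of_eq h2) ?_)
      exact le_iSup (fun k => csub (baddB B (γ (y 0) (y 1)) (Phit k fun n => y (n + 1))) (r (y 0))) k
  have hval_le_U : val ≤ U := hvalLeast U hU_fix
  -- achiever successors
  have h_iInf_att : ∀ f : Q → ℕ∞, (⨅ x, f x) ≠ ⊤ → ∃ x, f x = ⨅ y, f y := by
    intro f hf
    have hne : ∃ x, f x ≠ ⊤ := by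
      by_contra hno
      push_neg at hno
      exact hf (iInf_eq_top.mpr hno)
    have : Nonempty Q := ⟨hne.choose⟩
    obtain ⟨x₀, hx₀⟩ := Finite.exists_min f
    exact ⟨x₀, le_antisymm (le_iInf hx₀) (iInf_le f x₀)⟩
  have h_achiever : ∀ x, ext x ≠ ⊤ → ∃ x', γ x x' ≠ ⊤ ∧ ext x' ≠ ⊤ ∧
      csub (baddB B (γ x x') (ext x')) (r x) = ext x := by
    intro x hx
    have h1 := hS_ext x
    have hiinf : (⨅ x', baddB B (γ x x') (ext x')) ≠ ⊤ := by
      intro he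
      apply hx
      rw [← h1]
      unfold extStepB
      rw [he]
      exact csub_top_left _
    obtain ⟨x', hx'⟩ := h_iInf_att _ hiinf
    have hbne : baddB B (γ x x') (ext x') ≠ ⊤ := by rw [hx']; exact hiinf
    obtain ⟨hγ, hext', _⟩ := baddB_ne_top hbne
    refine ⟨x', hγ, hext', ?_⟩
    rw [hx']
    exact h1
    -- escape paths from `Q₁` states
  set Esc : Q → ℕ∞ → Prop := fun x b => ∃ m, 1 ≤ m ∧ ∃ p : ℕ → Q, ∃ w : ℕ → ℕ∞,
    p 0 = x ∧ w 0 = b ∧ Ω (p m) = 2 ∧ w m = ext (p m) ∧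
    ∀ i < m, γ (p i) (p (i + 1)) ≠ ⊤ ∧
      csub (baddB B (γ (p i) (p (i + 1))) (w (i + 1))) (r (p i)) ≤ w i ∧ w (i + 1) ≠ ⊤
    with hEsc
  have hEsc_up : ∀ x b b', Esc x b → b ≤ b' → Esc x b' := by
    intro x b b' hesc hbb
    obtain ⟨m, hm, p, w, hp0, hw0, hΩm, hwm, hstep⟩ := hesc
    set w' : ℕ → ℕ∞ := fun i => if i = 0 then b' else w i with hw'
    have hw'0 : w' 0 = b' := if_pos rfl
    have hw's : ∀ i, w' (i + 1) = w (i + 1) := fun i => if_neg (Nat.succ_ne_zero i)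
    have hw'm : w' m = w m := if_neg (by omega)
    refine ⟨m, hm, p, w', hp0, hw'0, hΩm, by rw [hw'm]; exact hwm, ?_⟩
    intro i hi
    obtain ⟨hγ, hle, hne⟩ := hstep i hi
    refine ⟨hγ, ?_, by rw [hw's i]; exact hne⟩
    rw [hw's i]
    by_cases h0 : i = 0
    · subst h0
      rw [hw'0]
      refine le_trans hle ?_
      rw [hw0]
      exact hbb
    · have : w' i = w i := if_neg h0
      rw [this]
      exact hle
  set R : {q' // Ω q' = 1} → ℕ∞ := fun x => sInf {b | Esc x.1 b} with hR
  have hR_esc : ∀ x : {q' // Ω q' = 1}, R x ≠ ⊤ → Esc x.1 (R x) := by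
    intro x hx
    have hne : {b | Esc x.1 b}.Nonempty := by
      by_contra hno
      rw [Set.not_nonempty_iff_eq_empty] at hno
      apply hx
      show sInf {b | Esc x.1 b} = ⊤
      rw [hno, sInf_empty]
    exact enat_sInf_mem hne
  have hR_post : ∀ x : {q' // Ω q' = 1}, R x ≤ extStepB B γ r (copair Ω hΩ R e₂) x.1 := by
    intro x
    unfold extStepB
    by_cases hm : (⨅ q' : Q, baddB B (γ x.1 q') (copair Ω hΩ R e₂ q')) = ⊤
    · rw [hm, csub_top_left]
      exact le_top
    · obtain ⟨x', hx'⟩ := h_iInf_att _ hm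
      have hbne : baddB B (γ x.1 x') (copair Ω hΩ R e₂ x') ≠ ⊤ := by
        rw [hx']
        exact hm
      obtain ⟨hγ, hcne, _⟩ := baddB_ne_top hbne
      set b₀ : ℕ∞ := csub (⨅ q' : Q, baddB B (γ x.1 q') (copair Ω hΩ R e₂ q')) (r x.1)
        with hb₀
      refine sInf_le ?_
      show Esc x.1 b₀
      by_cases h2 : Ω x' = 2
      · have hcop : copair Ω hΩ R e₂ x' = ext x' := by
          rw [hcop2 _ _ _ h2, hext, hcop2 _ _ _ h2]
        set p' : ℕ → Q := fun i => if i = 0 then x.1 else x' with hp'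
        set w' : ℕ → ℕ∞ := fun i => if i = 0 then b₀ else ext x' with hw'
        have hp'0 : p' 0 = x.1 := if_pos rfl
        have hp'1 : p' 1 = x' := if_neg (Nat.succ_ne_zero 0)
        have hw'0 : w' 0 = b₀ := if_pos rfl
        have hw'1 : w' 1 = ext x' := if_neg (Nat.succ_ne_zero 0)
        refine ⟨1, le_rfl, p', w', hp'0, hw'0, by rw [hp'1]; exact h2,
          by rw [hw'1, hp'1], ?_⟩
        intro i hi
        have hi0 : i = 0 := by omega
        subst hi0
        rw [hp'0, hp'1, hw'0, hw'1]
        refine ⟨hγ, ?_, by rw [← hcop]; exact hcne⟩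
        rw [← hcop, hx']
      · have h1 := (hΩ x').resolve_right h2
        have hcop : copair Ω hΩ R e₂ x' = R ⟨x', h1⟩ := hcop1 _ _ _ h1
        have hRne : R ⟨x', h1⟩ ≠ ⊤ := by
          rw [← hcop]
          exact hcne
        obtain ⟨m, hm1, p, w, hp0, hw0, hΩm, hwm, hstep⟩ := hR_esc ⟨x', h1⟩ hRne
        set p' : ℕ → Q := fun i => if i = 0 then x.1 else p (i - 1) with hp'
        set w' : ℕ → ℕ∞ := fun i => if i = 0 then b₀ else w (i - 1) with hw'
        have hp'0 : p' 0 = x.1 := if_pos rfl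
        have hw'0 : w' 0 = b₀ := if_pos rfl
        have hp's : ∀ i, p' (i + 1) = p i := fun i => by
          have : p' (i + 1) = p (i + 1 - 1) := if_neg (Nat.succ_ne_zero i)
          rwa [Nat.add_sub_cancel] at this
        have hw's : ∀ i, w' (i + 1) = w i := fun i => by
          have : w' (i + 1) = w (i + 1 - 1) := if_neg (Nat.succ_ne_zero i)
          rwa [Nat.add_sub_cancel] at this
        refine ⟨m + 1, by omega, p', w', hp'0, hw'0, by rw [hp's m]; exact hΩm,
          by rw [hw's m, hp's m]; exact hwm, ?_⟩
        intro i hi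
        by_cases h0 : i = 0
        · subst h0
          rw [hp'0, hp's 0, hw'0, hw's 0, hp0, hw0]
          refine ⟨hγ, ?_, hRne⟩
          rw [← hcop, hx']
        · obtain ⟨j, rfl⟩ : ∃ j, i = j + 1 := ⟨i - 1, by omega⟩
          have hj : j < m := by omega
          obtain ⟨hγj, hlej, hnej⟩ := hstep j hj
          rw [hp's j, hp's (j + 1), hw's j, hw's (j + 1)]
          exact ⟨hγj, hlej, hnej⟩
  have hR_le : R ≤ inner e₂ := h_postfix_le_inner e₂ R hR_post
    -- blocks
  have h_block : ∀ x, ext x ≠ ⊤ → ∃ m p w, 1 ≤ m ∧ (p : ℕ → Q) 0 = x ∧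
      (w : ℕ → ℕ∞) 0 = ext x ∧ w m = ext (p m) ∧ ext (p m) ≠ ⊤ ∧
      (Ω (p 0) = 2 ∨ Ω (p m) = 2) ∧
      ∀ i < m, γ (p i) (p (i + 1)) ≠ ⊤ ∧
        csub (baddB B (γ (p i) (p (i + 1))) (w (i + 1))) (r (p i)) ≤ w i := by
    intro x hx
    by_cases h2 : Ω x = 2
    · obtain ⟨x', hγ, hx', hach⟩ := h_achiever x hx
      set p' : ℕ → Q := fun i => if i = 0 then x else x' with hp'
      set w' : ℕ → ℕ∞ := fun i => if i = 0 then ext x else ext x' with hw'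
      have hp'0 : p' 0 = x := if_pos rfl
      have hp'1 : p' 1 = x' := if_neg (Nat.succ_ne_zero 0)
      have hw'0 : w' 0 = ext x := if_pos rfl
      have hw'1 : w' 1 = ext x' := if_neg (Nat.succ_ne_zero 0)
      refine ⟨1, p', w', le_rfl, hp'0, hw'0, by rw [hw'1, hp'1], by rw [hp'1]; exact hx',
        Or.inl (by rw [hp'0]; exact h2), ?_⟩
      intro i hi
      have hi0 : i = 0 := by omega
      subst hi0
      rw [hp'0, hp'1, hw'0, hw'1, hach]
      exact ⟨hγ, le_rfl⟩
    · have h1 := (hΩ x).resolve_right h2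
      have hRx : R ⟨x, h1⟩ ≤ ext x := by
        have h := hR_le ⟨x, h1⟩
        rw [hext, hcop1 _ _ _ h1]
        exact h
      have hRne : R ⟨x, h1⟩ ≠ ⊤ := fun e => hx (top_le_iff.mp (e ▸ hRx))
      have hesc : Esc x (ext x) := hEsc_up x _ _ (hR_esc ⟨x, h1⟩ hRne) hRx
      obtain ⟨m, hm, p, w, hp0, hw0, hΩm, hwm, hstep⟩ := hesc
      refine ⟨m, p, w, hm, hp0, hw0, hwm, ?_, Or.inr hΩm,
        fun i hi => ⟨(hstep i hi).1, (hstep i hi).2.1⟩⟩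
      rw [← hwm]
      have hlast := (hstep (m - 1) (by omega)).2.2
      rwa [show m - 1 + 1 = m by omega] at hlast
  choose bm bp bw hbm hbp0 hbw0 hbwm hbext hbacc hbstep using h_block
  -- glue the blocks into a run
  let qs : ℕ → {x : Q // ext x ≠ ⊤} := fun n =>
    Nat.rec ⟨q, hq⟩ (fun _ prev => ⟨bp prev.1 prev.2 (bm prev.1 prev.2),
      hbext prev.1 prev.2⟩) n
  let mj : ℕ → ℕ := fun j => bm (qs j).1 (qs j).2
  let pj : ℕ → ℕ → Q := fun j => bp (qs j).1 (qs j).2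
  let wj : ℕ → ℕ → ℕ∞ := fun j => bw (qs j).1 (qs j).2
  have hqs_succ : ∀ j, (qs (j + 1)).1 = pj j (mj j) := fun j => rfl
  have hpj0 : ∀ j, pj j 0 = (qs j).1 := fun j => hbp0 _ _
  have hwj0 : ∀ j, wj j 0 = ext (qs j).1 := fun j => hbw0 _ _
  have hwjm : ∀ j, wj j (mj j) = ext (pj j (mj j)) := fun j => hbwm _ _
  have hmj1 : ∀ j, 1 ≤ mj j := fun j => hbm _ _
  let N : ℕ → ℕ := fun j => Nat.rec 0 (fun j' acc => acc + mj j') j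
  have hN0 : N 0 = 0 := rfl
  have hNs : ∀ j, N (j + 1) = N j + mj j := fun j => rfl
  have hN_lt : ∀ j, N j < N (j + 1) := fun j => by
    rw [hNs j]
    have := hmj1 j
    omega
  have hN_mono : Monotone N := monotone_nat_of_le_succ fun j => le_of_lt (hN_lt j)
  have hN_ge : ∀ j, j ≤ N j := by
    intro j
    induction j with
    | zero => exact Nat.zero_le _
    | succ j ih =>
      have := hN_lt j
      omega
  let idx : ℕ → ℕ := fun n => Nat.rec 0
    (fun n' prev => if N (prev + 1) ≤ n' + 1 then prev + 1 else prev) n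
  have hidx0 : idx 0 = 0 := rfl
  have hidxs : ∀ n, idx (n + 1) = if N (idx n + 1) ≤ n + 1 then idx n + 1 else idx n :=
    fun n => rfl
  have h_idx_inv : ∀ n, N (idx n) ≤ n ∧ n < N (idx n + 1) := by
    intro n
    induction n with
    | zero =>
      rw [hidx0]
      have h1 := hN_lt 0
      constructor
      · rw [hN0]
      · omega
    | succ n ih =>
      rw [hidxs n]
      by_cases hc : N (idx n + 1) ≤ n + 1
      · rw [if_pos hc]
        have h1 := hN_lt (idx n + 1)
        exact ⟨hc, by omega⟩
      · rw [if_neg hc]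
        exact ⟨by omega, by omega⟩
  have h_idx1 : ∀ n, N (idx n) ≤ n := fun n => (h_idx_inv n).1
  have h_idx2 : ∀ n, n < N (idx n + 1) := fun n => (h_idx_inv n).2
  have h_idx_eq : ∀ j n, N j ≤ n → n < N (j + 1) → idx n = j := by
    intro j n h1 h2
    have hub : idx n ≤ j := by
      apply Classical.byContradiction; intro hcon
      push_neg at hcon
      have h3 : N (j + 1) ≤ N (idx n) := hN_mono (by omega : j + 1 ≤ idx n)
      have h4 := h_idx1 n
      omega
    have hlb : j ≤ idx n := by
      apply Classical.byContradiction; intro hcon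
      push_neg at hcon
      have h3 : N (idx n + 1) ≤ N j := hN_mono (by omega : idx n + 1 ≤ j)
      have h4 := h_idx2 n
      omega
    omega
  let z : ℕ → Q := fun n => pj (idx n) (n - N (idx n))
  let W : ℕ → ℕ∞ := fun n => wj (idx n) (n - N (idx n))
  have h_idx0 : idx 0 = 0 := h_idx_eq 0 0 (by rw [hN0]) (hN_lt 0)
  have h_z0 : z 0 = q := by
    show pj (idx 0) (0 - N (idx 0)) = q
    rw [h_idx0, hN0]
    exact hbp0 _ _
  have h_key : ∀ n, ∃ j i, i < mj j ∧ z n = pj j i ∧ W n = wj j i ∧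
      z (n + 1) = pj j (i + 1) ∧ W (n + 1) = wj j (i + 1) := by
    intro n
    refine ⟨idx n, n - N (idx n), ?_, rfl, rfl, ?_, ?_⟩
    · have := h_idx1 n
      have := h_idx2 n
      have := hNs (idx n)
      omega
    all_goals {
      by_cases hc : n + 1 < N (idx n + 1)
      · have hidx : idx (n + 1) = idx n := h_idx_eq (idx n) (n + 1)
          (le_trans (h_idx1 n) (Nat.le_succ n)) hc
        show _ = _
        have h1 := h_idx1 n
        have harg : n + 1 - N (idx (n + 1)) = (n - N (idx n)) + 1 := by
          rw [hidx]
          omega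
        first
          | (show pj (idx (n+1)) (n + 1 - N (idx (n+1))) = _ ; rw [harg, hidx])
          | (show wj (idx (n+1)) (n + 1 - N (idx (n+1))) = _ ; rw [harg, hidx])
      · have hc' : n + 1 = N (idx n + 1) := by
          have := h_idx2 n
          omega
        have hidx : idx (n + 1) = idx n + 1 := h_idx_eq (idx n + 1) (n + 1)
          (by omega) (by rw [hc']; exact hN_lt (idx n + 1))
        have harg : n + 1 - N (idx (n + 1)) = 0 := by
          rw [hidx, ← hc']
          omega
        have hi1 : n - N (idx n) + 1 = mj (idx n) := by
          have := h_idx1 n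
          have := hNs (idx n)
          omega
        first
          | (show pj (idx (n+1)) (n + 1 - N (idx (n+1))) = _ ;
             rw [harg, hidx, hpj0 (idx n + 1), hqs_succ (idx n), hi1])
          | (show wj (idx (n+1)) (n + 1 - N (idx (n+1))) = _ ;
             rw [harg, hidx, hwj0 (idx n + 1), hqs_succ (idx n), hi1, ← hwjm (idx n)])
    }
  have h_zsteps : ∀ n, γ (z n) (z (n + 1)) ≠ ⊤ := by
    intro n
    obtain ⟨j, i, hi, hz1, _, hz2, _⟩ := h_key n
    rw [hz1, hz2]
    exact (hbstep _ _ i hi).1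
  have h_W : ∀ n, csub (baddB B (γ (z n) (z (n + 1))) (W (n + 1))) (r (z n)) ≤ W n := by
    intro n
    obtain ⟨j, i, hi, hz1, hw1, hz2, hw2⟩ := h_key n
    rw [hz1, hz2, hw1, hw2]
    exact (hbstep _ _ i hi).2
  have h_W0 : W 0 = ext q := by
    show wj (idx 0) (0 - N (idx 0)) = ext q
    rw [h_idx0, hN0]
    exact hbw0 _ _
  have h_acc : Accepting Ω z := by
    intro N₀
    have hNj : z (N (N₀)) = pj N₀ 0 := by
      show pj (idx (N N₀)) (N N₀ - N (idx (N N₀))) = pj N₀ 0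
      rw [h_idx_eq N₀ (N N₀) le_rfl (hN_lt N₀), Nat.sub_self]
    have hNj1 : z (N (N₀ + 1)) = pj N₀ (mj N₀) := by
      show pj (idx (N (N₀ + 1))) (N (N₀ + 1) - N (idx (N (N₀ + 1)))) = pj N₀ (mj N₀)
      rw [h_idx_eq (N₀ + 1) (N (N₀ + 1)) le_rfl (hN_lt (N₀ + 1)), Nat.sub_self,
        hpj0 (N₀ + 1), hqs_succ N₀]
    rcases hbacc (qs N₀).1 (qs N₀).2 with hcase | hcase
    · refine ⟨N N₀, hN_ge N₀, ?_⟩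
      rw [hNj, hpj0 N₀]
      rw [hbp0 _ _] at hcase
      exact hcase
    · refine ⟨N (N₀ + 1), le_trans (hN_ge N₀) (le_of_lt (hN_lt N₀)), ?_⟩
      rw [hNj1]
      exact hcase
  -- upper bound along the constructed run
  have h_iter_le : ∀ k n, Phit k (sh z n) ≤ W n := by
    intro k
    induction k with
    | zero => intro n; exact zero_le
    | succ k ih =>
      intro n
      rw [hstep_phit k]
      show csub (baddB B (γ (sh z n 0) (sh z n 1)) (Phit k (fun j => sh z n (j + 1))))
        (r (sh z n 0)) ≤ W n
      rw [hsh_succ z n]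
      refine le_trans (csub_mono_left_s11 _ (baddB_mono_right B _ (ih (n + 1)))) ?_
      exact h_W n
  refine ⟨z, ⟨h_z0, h_zsteps⟩, h_acc, le_antisymm ?_ ?_⟩
  · have h1 : val z ≤ U z := hval_le_U z
    have h2 : U z ≤ W 0 := by
      apply iSup_le
      intro k
      have h3 := h_iter_le k 0
      rwa [show sh z 0 = z from funext fun n => congrArg z (Nat.zero_add n)] at h3
    rw [← h_W0] at *
    exact le_trans h1 h2
  · have h4 := h_lower z h_acc
    rwa [h_z0] at h4
end

section
/- For every state q of a B-bounded resource-aware Büchi word automaton, ext q = sInf { val z | z is an accepting run from q } (infimum in (ℕ∞, ≤), with sInf ∅ = ∞): the extent of q is the minimum, over all accepting runs from q, of the minimal initial resources required to execute the run. -/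
set_option linter.unusedSectionVars false
namespace Stmt12Aux

lemma csub_top_left (m : ℕ∞) : csub ⊤ m = ⊤ := by
  unfold csub
  by_cases h : m = ⊤
  · simp [h]
  · rw [if_neg (by simp [h])]
    lift m to ℕ using h; exact ENat.top_sub_coe m

lemma csub_ne_top {n m : ℕ∞} (h : csub n m ≠ ⊤) : n ≠ ⊤ := by
  intro hn; rw [hn, csub_top_left] at h; exact h rfl

lemma csub_mono_left {n n' : ℕ∞} (m : ℕ∞) (h : n ≤ n') : csub n m ≤ csub n' m := by
  by_cases hn' : n' = ⊤
  · rw [hn', csub_top_left]; exact le_top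
  · have hn : n ≠ ⊤ := fun hh => hn' (top_le_iff.mp (hh ▸ h))
    unfold csub
    rw [if_neg (by simp [hn]), if_neg (by simp [hn'])]
    exact tsub_le_tsub_right h m

lemma csub_le_left (n m : ℕ∞) : csub n m ≤ n := by
  unfold csub
  split
  · next h => exact h.1 ▸ le_refl _
  · exact tsub_le_self

lemma baddB_top_right (B : ℕ) (m : ℕ∞) : baddB B m ⊤ = ⊤ := by
  unfold baddB
  rw [if_neg]
  simp only [add_top]
  exact fun h => (lt_irrefl _ (lt_of_le_of_lt h (WithTop.coe_lt_top B))).elim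

lemma baddB_mono_right {n n' : ℕ∞} (B : ℕ) (m : ℕ∞) (h : n ≤ n') :
    baddB B m n ≤ baddB B m n' := by
  unfold baddB
  by_cases h' : m + n' ≤ (B : ℕ∞)
  · rw [if_pos h', if_pos (le_trans (add_le_add (le_refl m) h) h')]
    exact add_le_add (le_refl m) h
  · rw [if_neg h']; exact le_top

lemma baddB_ne_top {B : ℕ} {m n : ℕ∞} (h : baddB B m n ≠ ⊤) :
    baddB B m n = m + n ∧ m + n ≤ (B : ℕ∞) ∧ m ≠ ⊤ ∧ n ≠ ⊤ := by
  unfold baddB at h ⊢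
  by_cases h' : m + n ≤ (B : ℕ∞)
  · refine ⟨if_pos h', h', ?_, ?_⟩
    · intro hm; rw [hm, top_add] at h'
      exact absurd h' (by simp)
    · intro hn; rw [hn, add_top] at h'
      exact absurd h' (by simp)
  · exact absurd (if_neg h') h

/-- a monotone sequence in `ℕ∞` bounded by `B` (or hitting `⊤`) stabilizes -/
lemma mono_stab {f : ℕ → ℕ∞} (hf : Monotone f) {B : ℕ}
    (hb : ∀ n, f n ≤ (B : ℕ∞) ∨ f n = ⊤) : ∃ N, ∀ n, N ≤ n → f n = f N := by
  by_cases ht : ∃ n, f n = ⊤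
  · obtain ⟨N, hN⟩ := ht
    refine ⟨N, fun n hn => ?_⟩
    have := hf hn
    rw [hN] at this ⊢
    exact top_le_iff.mp this
  · push_neg at ht
    have hb' : ∀ n, f n ≤ (B : ℕ∞) := fun n => (hb n).resolve_right (ht n)
    set s : Set ℕ := Set.range (fun n => (f n).toNat) with hs
    have hsne : s.Nonempty := ⟨(f 0).toNat, 0, rfl⟩
    have hsb : BddAbove s := by
      refine ⟨B, ?_⟩
      rintro x ⟨n, rfl⟩
      exact ENat.toNat_le_of_le_coe (hb' n)
    obtain ⟨N, hN⟩ := Nat.sSup_mem hsne hsb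
    refine ⟨N, fun n hn => ?_⟩
    simp only at hN
    have h1 : (f n).toNat ≤ (f N).toNat := by
      have := le_csSup hsb (show (f n).toNat ∈ s from ⟨n, rfl⟩)
      rw [← hN] at this
      exact this
    have h2 : f n ≤ f N := by
      rw [← ENat.coe_toNat (ht n), ← ENat.coe_toNat (ht N)]
      exact_mod_cast h1
    exact le_antisymm h2 (hf hn)

/-- an antitone sequence in `ℕ∞` stabilizes -/
lemma anti_stab {f : ℕ → ℕ∞} (hf : Antitone f) : ∃ N, ∀ n, N ≤ n → f n = f N := by
  by_cases ht : ∀ n, f n = ⊤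
  · exact ⟨0, fun n _ => by rw [ht, ht]⟩
  · push_neg at ht
    obtain ⟨n₀, hn₀⟩ := ht
    set s : Set ℕ := Set.range (fun n => (f (n₀ + n)).toNat) with hs
    have hsne : s.Nonempty := ⟨(f (n₀ + 0)).toNat, 0, rfl⟩
    have hfin : ∀ n, f (n₀ + n) ≠ ⊤ := fun n h =>
      hn₀ (top_le_iff.mp (h ▸ hf (Nat.le_add_right n₀ n)))
    obtain ⟨N, hN⟩ := Nat.sInf_mem hsne
    refine ⟨n₀ + N, fun n hn => ?_⟩
    obtain ⟨k, rfl⟩ := Nat.exists_eq_add_of_le hn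
    simp only at hN
    have h1 : (f (n₀ + N)).toNat ≤ (f (n₀ + N + k)).toNat := by
      rw [hN]
      exact Nat.sInf_le ⟨N + k, by rw [Nat.add_assoc]⟩
    have hfin2 : f (n₀ + N + k) ≠ ⊤ := by rw [Nat.add_assoc]; exact hfin (N + k)
    have h2 : f (n₀ + N) ≤ f (n₀ + N + k) := by
      rw [← ENat.coe_toNat (hfin N), ← ENat.coe_toNat hfin2]
      exact_mod_cast h1
    exact le_antisymm (hf (Nat.le_add_right _ k)) h2


section Ops
variable {Q : Type*} [Fintype Q] (γ : Q → Q → ℕ∞) (r : Q → ℕ∞) (B : ℕ)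

lemma extStepB_inL (u : Q → ℕ∞) (q : Q) :
    extStepB B γ r u q ≤ (B : ℕ∞) ∨ extStepB B γ r u q = ⊤ := by
  unfold extStepB
  by_cases h : (⨅ q' : Q, baddB B (γ q q') (u q')) = ⊤
  · right; rw [h, csub_top_left]
  · left
    rw [iInf_eq_top] at h
    push_neg at h
    obtain ⟨q', hq'⟩ := h
    have h1 : (⨅ q'' : Q, baddB B (γ q q'') (u q'')) ≤ baddB B (γ q q') (u q') :=
      iInf_le _ q'
    have h2 := (baddB_ne_top hq').2.1
    rw [(baddB_ne_top hq').1] at h1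
    exact le_trans (csub_le_left _ _) (le_trans h1 h2)

lemma PhiB_inL (v : (ℕ → Q) → ℕ∞) (z : ℕ → Q) :
    PhiB B γ r v z ≤ (B : ℕ∞) ∨ PhiB B γ r v z = ⊤ := by
  unfold PhiB
  by_cases h : baddB B (γ (z 0) (z 1)) (v (fun n => z (n + 1))) = ⊤
  · right; rw [h, csub_top_left]
  · left
    have h2 := (baddB_ne_top h).2.1
    rw [(baddB_ne_top h).1] at *
    exact le_trans (csub_le_left _ _) h2

lemma extStepB_mono {u u' : Q → ℕ∞} (h : ∀ q, u q ≤ u' q) (q : Q) :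
    extStepB B γ r u q ≤ extStepB B γ r u' q := by
  unfold extStepB
  refine csub_mono_left _ (le_iInf fun q' => le_trans (iInf_le _ q') ?_)
  exact baddB_mono_right B _ (h q')

lemma PhiB_mono {v v' : (ℕ → Q) → ℕ∞} (h : v ≤ v') (z : ℕ → Q) :
    PhiB B γ r v z ≤ PhiB B γ r v' z :=
  csub_mono_left _ (baddB_mono_right B _ (h _))

end Ops

section Copair
variable {Q : Type*} (Ω : Q → ℕ) (hΩ : ∀ q, Ω q = 1 ∨ Ω q = 2)

lemma copair_of2 (u₁ : {q // Ω q = 1} → ℕ∞) (u₂ : {q // Ω q = 2} → ℕ∞)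
    {q : Q} (h : Ω q = 2) : copair Ω hΩ u₁ u₂ q = u₂ ⟨q, h⟩ := by
  unfold copair; rw [dif_pos h]

lemma copair_of1 (u₁ : {q // Ω q = 1} → ℕ∞) (u₂ : {q // Ω q = 2} → ℕ∞)
    {q : Q} (h : Ω q = 1) :
    copair Ω hΩ u₁ u₂ q = u₁ ⟨q, h⟩ := by
  unfold copair
  rw [dif_neg (by omega)]

lemma copair_mono {u₁ u₁' : {q // Ω q = 1} → ℕ∞} {u₂ u₂' : {q // Ω q = 2} → ℕ∞}
    (h1 : u₁ ≤ u₁') (h2 : u₂ ≤ u₂') (q : Q) :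
    copair Ω hΩ u₁ u₂ q ≤ copair Ω hΩ u₁' u₂' q := by
  unfold copair
  split
  · exact h2 _
  · exact h1 _

end Copair

section ValIter
variable {Q : Type*} [Fintype Q] (γ : Q → Q → ℕ∞) (r : Q → ℕ∞) (B : ℕ)

noncomputable def Aiter (k : ℕ) : (ℕ → Q) → ℕ∞ := (PhiB B γ r)^[k] ⊥

lemma Aiter_succ (k : ℕ) (z : ℕ → Q) :
    Aiter γ r B (k + 1) z
      = csub (baddB B (γ (z 0) (z 1)) (Aiter γ r B k (fun n => z (n + 1)))) (r (z 0)) := by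
  unfold Aiter
  rw [Function.iterate_succ_apply']
  rfl

lemma Aiter_mono_k : Monotone (Aiter γ r B) := by
  have hstep : ∀ k, Aiter γ r B k ≤ Aiter γ r B (k + 1) := by
    intro k
    induction k with
    | zero => exact bot_le
    | succ k ih =>
        intro z
        rw [Aiter_succ, Aiter_succ]
        exact PhiB_mono γ r B ih _
  exact monotone_nat_of_le_succ hstep

lemma Aiter_inL (k : ℕ) (z : ℕ → Q) :
    Aiter γ r B k z ≤ (B : ℕ∞) ∨ Aiter γ r B k z = ⊤ := by
  cases k with
  | zero => left; exact le_trans bot_le zero_le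
  | succ k =>
      unfold Aiter
      rw [Function.iterate_succ_apply']
      exact PhiB_inL γ r B _ z

noncomputable def Vfun : (ℕ → Q) → ℕ∞ := fun z => ⨆ k, Aiter γ r B k z

lemma Vfun_stab (z : ℕ → Q) : ∃ N, Vfun γ r B z = Aiter γ r B N z ∧
    ∀ k, N ≤ k → Aiter γ r B k z = Aiter γ r B N z := by
  obtain ⟨N, hN⟩ := mono_stab (f := fun k => Aiter γ r B k z)
    (fun a b hab => Aiter_mono_k γ r B hab z) (fun k => Aiter_inL γ r B k z)
  refine ⟨N, le_antisymm (iSup_le fun k => ?_) (le_iSup (fun k => Aiter γ r B k z) N), hN⟩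
  rcases le_total k N with h | h
  · exact Aiter_mono_k γ r B h z
  · exact le_of_eq (hN k h)

lemma Aiter_le_Vfun (k : ℕ) : Aiter γ r B k ≤ Vfun γ r B :=
  fun z => le_iSup (fun k => Aiter γ r B k z) k

lemma Vfun_fix : PhiB B γ r (Vfun γ r B) = Vfun γ r B := by
  funext z
  obtain ⟨N, hVe, hN⟩ := Vfun_stab γ r B (fun n => z (n + 1))
  apply le_antisymm
  · have : PhiB B γ r (Vfun γ r B) z
        = csub (baddB B (γ (z 0) (z 1)) (Vfun γ r B (fun n => z (n + 1)))) (r (z 0)) := rfl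
    rw [this, hVe, ← Aiter_succ]
    exact le_iSup (fun k => Aiter γ r B k z) (N + 1)
  · refine iSup_le fun k => ?_
    calc Aiter γ r B k z ≤ Aiter γ r B (k + 1) z := Aiter_mono_k γ r B (Nat.le_succ k) z
    _ ≤ PhiB B γ r (Vfun γ r B) z := by
        unfold Aiter
        rw [Function.iterate_succ_apply']
        exact PhiB_mono γ r B (Aiter_le_Vfun γ r B k) z

lemma val_eq_Vfun (val : (ℕ → Q) → ℕ∞) (hval : PhiB B γ r val = val)
    (hvalLeast : ∀ w, PhiB B γ r w = w → val ≤ w) : val = Vfun γ r B := by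
  refine le_antisymm (hvalLeast _ (Vfun_fix γ r B)) fun z => ?_
  refine iSup_le fun k => ?_
  induction k generalizing z with
  | zero => exact bot_le
  | succ k ih =>
      have : Aiter γ r B (k + 1) ≤ PhiB B γ r val := by
        intro z'
        unfold Aiter
        rw [Function.iterate_succ_apply']
        exact PhiB_mono γ r B (fun z'' => ih z'') z'
      rw [hval] at this
      exact this z

end ValIter


section ExtIter
variable {Q : Type*} [Fintype Q] (γ : Q → Q → ℕ∞) (r : Q → ℕ∞) (B : ℕ)
  (Ω : Q → ℕ) (hΩ : ∀ q, Ω q = 1 ∨ Ω q = 2)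

noncomputable def Hop (u₂ : {q // Ω q = 2} → ℕ∞) (u₁ : {q // Ω q = 1} → ℕ∞) :
    {q // Ω q = 1} → ℕ∞ :=
  fun q => extStepB B γ r (copair Ω hΩ u₁ u₂) q.1

lemma Hop_mono {u₂ u₂' : {q // Ω q = 2} → ℕ∞} {u₁ u₁' : {q // Ω q = 1} → ℕ∞}
    (h2 : u₂ ≤ u₂') (h1 : u₁ ≤ u₁') :
    Hop γ r B Ω hΩ u₂ u₁ ≤ Hop γ r B Ω hΩ u₂' u₁' :=
  fun q => extStepB_mono γ r B (fun q' => copair_mono Ω hΩ h1 h2 q') q.1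

noncomputable def giter (u₂ : {q // Ω q = 2} → ℕ∞) (k : ℕ) : {q // Ω q = 1} → ℕ∞ :=
  (Hop γ r B Ω hΩ u₂)^[k] ⊤

lemma giter_succ (u₂ : {q // Ω q = 2} → ℕ∞) (k : ℕ) :
    giter γ r B Ω hΩ u₂ (k + 1) = Hop γ r B Ω hΩ u₂ (giter γ r B Ω hΩ u₂ k) := by
  unfold giter
  rw [Function.iterate_succ_apply']

lemma Hop_mono1 (u₂ : {q // Ω q = 2} → ℕ∞) : Monotone (Hop γ r B Ω hΩ u₂) :=
  fun _ _ h => Hop_mono γ r B Ω hΩ (le_refl u₂) h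

lemma giter_anti (u₂ : {q // Ω q = 2} → ℕ∞) : Antitone (giter γ r B Ω hΩ u₂) := by
  apply antitone_nat_of_succ_le
  intro k
  have : giter γ r B Ω hΩ u₂ (k + 1) = (Hop γ r B Ω hΩ u₂)^[k] (Hop γ r B Ω hΩ u₂ ⊤) := by
    unfold giter; rw [Function.iterate_succ_apply]
  rw [this]
  exact (Hop_mono1 γ r B Ω hΩ u₂).iterate k le_top

lemma giter_mono_u (u₂ u₂' : {q // Ω q = 2} → ℕ∞) (h : u₂ ≤ u₂') (k : ℕ) :
    giter γ r B Ω hΩ u₂ k ≤ giter γ r B Ω hΩ u₂' k := by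
  induction k with
  | zero => exact le_refl _
  | succ k ih =>
      rw [giter_succ, giter_succ]
      exact Hop_mono γ r B Ω hΩ h ih

lemma giter_stab (u₂ : {q // Ω q = 2} → ℕ∞) :
    ∃ K, giter γ r B Ω hΩ u₂ (K + 1) = giter γ r B Ω hΩ u₂ K := by
  classical
  have hc : ∀ q : {q // Ω q = 1}, ∃ N, ∀ k, N ≤ k →
      giter γ r B Ω hΩ u₂ k q = giter γ r B Ω hΩ u₂ N q := by
    intro q
    exact anti_stab (f := fun k => giter γ r B Ω hΩ u₂ k q)
      (fun a b hab => giter_anti γ r B Ω hΩ u₂ hab q)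
  choose N hN using hc
  refine ⟨Finset.univ.sup N, funext fun q => ?_⟩
  have h1 : N q ≤ Finset.univ.sup N := Finset.le_sup (Finset.mem_univ q)
  rw [hN q _ (le_trans h1 (Nat.le_succ _)), hN q _ h1]

/-- `inn u₂` equals every stabilized iterate, and is below all iterates. -/
lemma inner_le_giter (inn : ({q // Ω q = 2} → ℕ∞) → ({q // Ω q = 1} → ℕ∞))
    (hinn : ∀ u₂, (fun q : {q // Ω q = 1} =>
      extStepB B γ r (copair Ω hΩ (inn u₂) u₂) q.1) = inn u₂)
    (u₂ : {q // Ω q = 2} → ℕ∞) (k : ℕ) : inn u₂ ≤ giter γ r B Ω hΩ u₂ k := by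
  induction k with
  | zero => exact le_top
  | succ k ih =>
      rw [giter_succ]
      calc inn u₂ = Hop γ r B Ω hΩ u₂ (inn u₂) := (hinn u₂).symm
      _ ≤ Hop γ r B Ω hΩ u₂ (giter γ r B Ω hΩ u₂ k) :=
          Hop_mono γ r B Ω hΩ (le_refl u₂) ih

lemma inner_eq_giter (inn : ({q // Ω q = 2} → ℕ∞) → ({q // Ω q = 1} → ℕ∞))
    (hinn : ∀ u₂, (fun q : {q // Ω q = 1} =>
      extStepB B γ r (copair Ω hΩ (inn u₂) u₂) q.1) = inn u₂)
    (hinnG : ∀ u₂ u₁, (fun q : {q // Ω q = 1} =>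
      extStepB B γ r (copair Ω hΩ u₁ u₂) q.1) = u₁ → u₁ ≤ inn u₂)
    (u₂ : {q // Ω q = 2} → ℕ∞) {K : ℕ}
    (hK : giter γ r B Ω hΩ u₂ (K + 1) = giter γ r B Ω hΩ u₂ K) :
    inn u₂ = giter γ r B Ω hΩ u₂ K := by
  refine le_antisymm (inner_le_giter γ r B Ω hΩ inn hinn u₂ K) ?_
  exact hinnG u₂ _ ((giter_succ γ r B Ω hΩ u₂ K).symm.trans hK)

lemma inner_mono (inn : ({q // Ω q = 2} → ℕ∞) → ({q // Ω q = 1} → ℕ∞))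
    (hinn : ∀ u₂, (fun q : {q // Ω q = 1} =>
      extStepB B γ r (copair Ω hΩ (inn u₂) u₂) q.1) = inn u₂)
    (hinnG : ∀ u₂ u₁, (fun q : {q // Ω q = 1} =>
      extStepB B γ r (copair Ω hΩ u₁ u₂) q.1) = u₁ → u₁ ≤ inn u₂)
    {u₂ u₂' : {q // Ω q = 2} → ℕ∞} (h : u₂ ≤ u₂') : inn u₂ ≤ inn u₂' := by
  obtain ⟨K, hK⟩ := giter_stab γ r B Ω hΩ u₂'
  rw [inner_eq_giter γ r B Ω hΩ inn hinn hinnG u₂' hK]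
  exact le_trans (inner_le_giter γ r B Ω hΩ inn hinn u₂ K)
    (giter_mono_u γ r B Ω hΩ u₂ u₂' h K)

section F2
variable (inn : ({q // Ω q = 2} → ℕ∞) → ({q // Ω q = 1} → ℕ∞))

def HINN (inn : ({q // Ω q = 2} → ℕ∞) → ({q // Ω q = 1} → ℕ∞)) : Prop :=
  ∀ u₂, (fun q : {q // Ω q = 1} =>
      extStepB B γ r (copair Ω hΩ (inn u₂) u₂) q.1) = inn u₂
def HING (inn : ({q // Ω q = 2} → ℕ∞) → ({q // Ω q = 1} → ℕ∞)) : Prop :=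
  ∀ u₂ u₁, (fun q : {q // Ω q = 1} =>
      extStepB B γ r (copair Ω hΩ u₁ u₂) q.1) = u₁ → u₁ ≤ inn u₂

noncomputable def F2op (u₂ : {q // Ω q = 2} → ℕ∞) : {q // Ω q = 2} → ℕ∞ :=
  fun q => extStepB B γ r (copair Ω hΩ (inn u₂) u₂) q.1

lemma F2op_mono (hinn : HINN γ r B Ω hΩ inn) (hinnG : HING γ r B Ω hΩ inn) {u₂ u₂' : {q // Ω q = 2} → ℕ∞} (h : u₂ ≤ u₂') :
    F2op γ r B Ω hΩ inn u₂ ≤ F2op γ r B Ω hΩ inn u₂' :=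
  fun q => extStepB_mono γ r B (fun q' => copair_mono Ω hΩ
    (inner_mono γ r B Ω hΩ inn hinn hinnG h) h q') q.1

noncomputable def biter (k : ℕ) : {q // Ω q = 2} → ℕ∞ :=
  (F2op γ r B Ω hΩ inn)^[k] ⊥

lemma biter_succ (k : ℕ) : biter γ r B Ω hΩ inn (k + 1)
    = F2op γ r B Ω hΩ inn (biter γ r B Ω hΩ inn k) := by
  unfold biter
  rw [Function.iterate_succ_apply']

lemma F2op_mono1 (hinn : HINN γ r B Ω hΩ inn) (hinnG : HING γ r B Ω hΩ inn) : Monotone (F2op γ r B Ω hΩ inn) :=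
  fun _ _ h => F2op_mono γ r B Ω hΩ inn hinn hinnG h

lemma biter_mono (hinn : HINN γ r B Ω hΩ inn) (hinnG : HING γ r B Ω hΩ inn) : Monotone (biter γ r B Ω hΩ inn) := by
  apply monotone_nat_of_le_succ
  intro k
  have : biter γ r B Ω hΩ inn (k + 1) = (F2op γ r B Ω hΩ inn)^[k] (F2op γ r B Ω hΩ inn ⊥) := by
    unfold biter; rw [Function.iterate_succ_apply]
  rw [this]
  exact (F2op_mono1 γ r B Ω hΩ inn hinn hinnG).iterate k bot_le

lemma biter_inL (k : ℕ) (q : {q // Ω q = 2}) :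
    biter γ r B Ω hΩ inn k q ≤ (B : ℕ∞) ∨ biter γ r B Ω hΩ inn k q = ⊤ := by
  cases k with
  | zero => left; exact le_trans bot_le zero_le
  | succ k =>
      rw [biter_succ]
      exact extStepB_inL γ r B _ q.1

lemma biter_stab (hinn : HINN γ r B Ω hΩ inn) (hinnG : HING γ r B Ω hΩ inn) : ∃ K, biter γ r B Ω hΩ inn (K + 1) = biter γ r B Ω hΩ inn K := by
  classical
  have hc : ∀ q : {q // Ω q = 2}, ∃ N, ∀ k, N ≤ k →
      biter γ r B Ω hΩ inn k q = biter γ r B Ω hΩ inn N q := by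
    intro q
    exact mono_stab (f := fun k => biter γ r B Ω hΩ inn k q)
      (fun a b hab => biter_mono γ r B Ω hΩ inn hinn hinnG hab q)
      (fun k => biter_inL γ r B Ω hΩ inn k q)
  choose N hN using hc
  refine ⟨Finset.univ.sup N, funext fun q => ?_⟩
  have h1 : N q ≤ Finset.univ.sup N := Finset.le_sup (Finset.mem_univ q)
  rw [hN q _ (le_trans h1 (Nat.le_succ _)), hN q _ h1]

variable (e₂ : {q // Ω q = 2} → ℕ∞)

lemma biter_le_e₂ (hinn : HINN γ r B Ω hΩ inn) (hinnG : HING γ r B Ω hΩ inn)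
    (he₂ : (fun q : {q // Ω q = 2} =>
      extStepB B γ r (copair Ω hΩ (inn e₂) e₂) q.1) = e₂) (k : ℕ) : biter γ r B Ω hΩ inn k ≤ e₂ := by
  induction k with
  | zero => exact bot_le
  | succ k ih =>
      rw [biter_succ]
      calc F2op γ r B Ω hΩ inn (biter γ r B Ω hΩ inn k)
          ≤ F2op γ r B Ω hΩ inn e₂ :=
            F2op_mono γ r B Ω hΩ inn hinn hinnG ih
      _ = e₂ := he₂

/-- pre-fixpoint induction principle for `e₂` -/
lemma e₂_le_of_prefix (hinn : HINN γ r B Ω hΩ inn) (hinnG : HING γ r B Ω hΩ inn)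
    (he₂Least : ∀ u₂, (fun q : {q // Ω q = 2} =>
      extStepB B γ r (copair Ω hΩ (inn u₂) u₂) q.1) = u₂ → e₂ ≤ u₂)
    (u₂ : {q // Ω q = 2} → ℕ∞)
    (hu : F2op γ r B Ω hΩ inn u₂ ≤ u₂) : e₂ ≤ u₂ := by
  obtain ⟨K, hK⟩ := biter_stab γ r B Ω hΩ inn hinn hinnG
  have h1 : e₂ ≤ biter γ r B Ω hΩ inn K :=
    he₂Least _ ((biter_succ γ r B Ω hΩ inn K).symm.trans hK)
  have h2 : ∀ k, biter γ r B Ω hΩ inn k ≤ u₂ := by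
    intro k
    induction k with
    | zero => exact bot_le
    | succ k ih =>
        rw [biter_succ]
        exact le_trans (F2op_mono γ r B Ω hΩ inn hinn hinnG ih) hu
  exact le_trans h1 (h2 K)

/-- `ext` is a fixpoint of `extStepB`. -/
lemma ext_fix (hinn : HINN γ r B Ω hΩ inn)
    (he₂ : (fun q : {q // Ω q = 2} =>
      extStepB B γ r (copair Ω hΩ (inn e₂) e₂) q.1) = e₂)
    (ext : Q → ℕ∞) (hext : ext = copair Ω hΩ (inn e₂) e₂) (q : Q) :
    ext q = extStepB B γ r ext q := by
  subst hext
  rcases hΩ q with h1 | h2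
  · rw [copair_of1 Ω hΩ _ _ h1]
    exact (congrFun (hinn e₂) ⟨q, h1⟩).symm
  · rw [copair_of2 Ω hΩ _ _ h2]
    exact (congrFun he₂ ⟨q, h2⟩).symm

end F2
end ExtIter


section DirII
variable {Q : Type*} [Fintype Q] (γ : Q → Q → ℕ∞) (r : Q → ℕ∞) (B : ℕ)
  (Ω : Q → ℕ) (hΩ : ∀ q, Ω q = 1 ∨ Ω q = 2)

noncomputable def Wfun (val : (ℕ → Q) → ℕ∞) (q : Q) : ℕ∞ :=
  sInf {v : ℕ∞ | ∃ z : ℕ → Q, IsRun γ q z ∧ Accepting Ω z ∧ val z = v}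

lemma tail_isrun {q : Q} {z : ℕ → Q} (h : IsRun γ q z) :
    IsRun γ (z 1) (fun n => z (n + 1)) :=
  ⟨rfl, fun n => h.2 (n + 1)⟩

lemma tail_acc {z : ℕ → Q} (h : Accepting Ω z) : Accepting Ω (fun n => z (n + 1)) := by
  intro N
  obtain ⟨n, hn1, hn2⟩ := h (N + 1)
  refine ⟨n - 1, by omega, ?_⟩
  show Ω (z (n - 1 + 1)) = 2
  have hh : n - 1 + 1 = n := by omega
  rw [hh]
  exact hn2

lemma W_le_val (val : (ℕ → Q) → ℕ∞) {q : Q} {z : ℕ → Q}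
    (h1 : IsRun γ q z) (h2 : Accepting Ω z) : Wfun γ Ω val q ≤ val z :=
  sInf_le ⟨z, h1, h2, rfl⟩

lemma val_unroll (val : (ℕ → Q) → ℕ∞) (hval : PhiB B γ r val = val) (z : ℕ → Q) :
    val z = csub (baddB B (γ (z 0) (z 1)) (val (fun n => z (n + 1)))) (r (z 0)) :=
  (congrFun hval z).symm

noncomputable def W2 (val : (ℕ → Q) → ℕ∞) : {q // Ω q = 2} → ℕ∞ :=
  fun q => Wfun γ Ω val q.1

lemma innW2_le_val (inn : ({q // Ω q = 2} → ℕ∞) → ({q // Ω q = 1} → ℕ∞))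
    (hinn : HINN γ r B Ω hΩ inn)
    (val : (ℕ → Q) → ℕ∞) (hval : PhiB B γ r val = val) :
    ∀ n (z : ℕ → Q), (∀ m, γ (z m) (z (m + 1)) ≠ ⊤) → Accepting Ω z →
      Ω (z n) = 2 → ∀ h1 : Ω (z 0) = 1,
      inn (W2 γ Ω val) ⟨z 0, h1⟩ ≤ val z := by
  intro n
  induction n with
  | zero => intro z _ _ hn h1; omega
  | succ n ih =>
      intro z hz hacc hn h1
      have key : copair Ω hΩ (inn (W2 γ Ω val)) (W2 γ Ω val) (z 1)
          ≤ val (fun m => z (m + 1)) := by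
        rcases hΩ (z 1) with h1' | h2'
        · rw [copair_of1 Ω hΩ _ _ h1']
          exact ih (fun m => z (m + 1)) (fun m => hz (m + 1)) (tail_acc Ω hacc) hn h1'
        · rw [copair_of2 Ω hΩ _ _ h2']
          exact W_le_val γ Ω val ⟨rfl, fun m => hz (m + 1)⟩ (tail_acc Ω hacc)
      calc inn (W2 γ Ω val) ⟨z 0, h1⟩
          = extStepB B γ r (copair Ω hΩ (inn (W2 γ Ω val)) (W2 γ Ω val)) (z 0) :=
            (congrFun (hinn (W2 γ Ω val)) ⟨z 0, h1⟩).symm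
        _ ≤ csub (baddB B (γ (z 0) (z 1))
              (copair Ω hΩ (inn (W2 γ Ω val)) (W2 γ Ω val) (z 1))) (r (z 0)) :=
            csub_mono_left _ (iInf_le _ (z 1))
        _ ≤ csub (baddB B (γ (z 0) (z 1)) (val (fun m => z (m + 1)))) (r (z 0)) :=
            csub_mono_left _ (baddB_mono_right B _ key)
        _ = val z := (val_unroll γ r B val hval z).symm

lemma innW2_le_W (inn : ({q // Ω q = 2} → ℕ∞) → ({q // Ω q = 1} → ℕ∞))
    (hinn : HINN γ r B Ω hΩ inn)
    (val : (ℕ → Q) → ℕ∞) (hval : PhiB B γ r val = val)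
    (q : Q) (h1 : Ω q = 1) : inn (W2 γ Ω val) ⟨q, h1⟩ ≤ Wfun γ Ω val q := by
  apply le_sInf
  rintro v ⟨z, hrun, hacc, rfl⟩
  obtain ⟨n, _, hn⟩ := hacc 0
  have h0 : Ω (z 0) = 1 := hrun.1.symm ▸ h1
  have := innW2_le_val γ r B Ω hΩ inn hinn val hval n z hrun.2 hacc hn h0
  have he : (⟨z 0, h0⟩ : {q // Ω q = 1}) = ⟨q, h1⟩ := by
    simp [hrun.1]
  rwa [he] at this

lemma F2_W_prefix (inn : ({q // Ω q = 2} → ℕ∞) → ({q // Ω q = 1} → ℕ∞))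
    (hinn : HINN γ r B Ω hΩ inn)
    (val : (ℕ → Q) → ℕ∞) (hval : PhiB B γ r val = val) :
    F2op γ r B Ω hΩ inn (W2 γ Ω val) ≤ W2 γ Ω val := by
  intro q
  apply le_sInf
  rintro v ⟨z, hrun, hacc, rfl⟩
  have h0 : z 0 = q.1 := hrun.1
  have key : copair Ω hΩ (inn (W2 γ Ω val)) (W2 γ Ω val) (z 1)
      ≤ val (fun m => z (m + 1)) := by
    rcases hΩ (z 1) with h1' | h2'
    · rw [copair_of1 Ω hΩ _ _ h1']
      obtain ⟨n, _, hn⟩ := tail_acc Ω hacc 0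
      exact innW2_le_val γ r B Ω hΩ inn hinn val hval n (fun m => z (m + 1))
        (fun m => hrun.2 (m + 1)) (tail_acc Ω hacc) hn h1'
    · rw [copair_of2 Ω hΩ _ _ h2']
      exact W_le_val γ Ω val ⟨rfl, fun m => hrun.2 (m + 1)⟩ (tail_acc Ω hacc)
  calc F2op γ r B Ω hΩ inn (W2 γ Ω val) q
      ≤ csub (baddB B (γ q.1 (z 1))
          (copair Ω hΩ (inn (W2 γ Ω val)) (W2 γ Ω val) (z 1))) (r q.1) :=
        csub_mono_left _ (iInf_le _ (z 1))
    _ ≤ csub (baddB B (γ q.1 (z 1)) (val (fun m => z (m + 1)))) (r q.1) :=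
        csub_mono_left _ (baddB_mono_right B _ key)
    _ = val z := by rw [val_unroll γ r B val hval z, h0]

lemma dirII (inn : ({q // Ω q = 2} → ℕ∞) → ({q // Ω q = 1} → ℕ∞))
    (hinn : HINN γ r B Ω hΩ inn) (hinnG : HING γ r B Ω hΩ inn)
    (e₂ : {q // Ω q = 2} → ℕ∞)
    (he₂Least : ∀ u₂, (fun q : {q // Ω q = 2} =>
      extStepB B γ r (copair Ω hΩ (inn u₂) u₂) q.1) = u₂ → e₂ ≤ u₂)
    (val : (ℕ → Q) → ℕ∞) (hval : PhiB B γ r val = val)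
    (ext : Q → ℕ∞) (hext : ext = copair Ω hΩ (inn e₂) e₂) (q : Q) :
    ext q ≤ Wfun γ Ω val q := by
  have he2W : e₂ ≤ W2 γ Ω val :=
    e₂_le_of_prefix γ r B Ω hΩ inn e₂ hinn hinnG he₂Least _
      (F2_W_prefix γ r B Ω hΩ inn hinn val hval)
  subst hext
  rcases hΩ q with h1 | h2
  · rw [copair_of1 Ω hΩ _ _ h1]
    calc inn e₂ ⟨q, h1⟩ ≤ inn (W2 γ Ω val) ⟨q, h1⟩ :=
          inner_mono γ r B Ω hΩ inn hinn hinnG he2W ⟨q, h1⟩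
      _ ≤ Wfun γ Ω val q := innW2_le_W γ r B Ω hΩ inn hinn val hval q h1
  · rw [copair_of2 Ω hΩ _ _ h2]
    exact he2W ⟨q, h2⟩

end DirII


section DirI
variable {Q : Type*} [Fintype Q] (γ : Q → Q → ℕ∞) (r : Q → ℕ∞) (B : ℕ)
  (Ω : Q → ℕ) (hΩ : ∀ q, Ω q = 1 ∨ Ω q = 2)

lemma iInf_attained [Nonempty Q] (f : Q → ℕ∞) : ∃ q, (⨅ q', f q') = f q := by
  obtain ⟨q, hq⟩ := Finite.exists_min f
  exact ⟨q, le_antisymm (iInf_le f q) (le_iInf hq)⟩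

/-- iterated weighted prefix-cost of a path with seed `t` -/
noncomputable def Dseq : ℕ → (ℕ → Q) → ℕ∞ → ℕ∞
  | 0, _, t => t
  | (m + 1), p, t =>
      csub (baddB B (γ (p 0) (p 1)) (Dseq m (fun i => p (i + 1)) t)) (r (p 0))

lemma Dseq_mono_t : ∀ (m : ℕ) (p : ℕ → Q) {t t' : ℕ∞}, t ≤ t' →
    Dseq γ r B m p t ≤ Dseq γ r B m p t' := by
  intro m
  induction m with
  | zero => intro p t t' h; exact h
  | succ m ih =>
      intro p t t' h
      exact csub_mono_left _ (baddB_mono_right B _ (ih _ h))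

def consQ (q : Q) (p : ℕ → Q) : ℕ → Q
  | 0 => q
  | (i + 1) => p i

lemma Dseq_cons (m : ℕ) (q : Q) (p : ℕ → Q) (t : ℕ∞) :
    Dseq γ r B (m + 1) (consQ q p) t
      = csub (baddB B (γ q (p 0)) (Dseq γ r B m p t)) (r q) := rfl

lemma seg1 (inn : ({q // Ω q = 2} → ℕ∞) → ({q // Ω q = 1} → ℕ∞))
    (e₂ : {q // Ω q = 2} → ℕ∞) :
    ∀ (k : ℕ) (q : Q) (h1 : Ω q = 1), giter γ r B Ω hΩ e₂ k ⟨q, h1⟩ ≠ ⊤ →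
    ∃ (m : ℕ) (p : ℕ → Q), 1 ≤ m ∧ p 0 = q ∧
      (∀ i, i < m → γ (p i) (p (i + 1)) ≠ ⊤) ∧
      ∃ h2 : Ω (p m) = 2, e₂ ⟨p m, h2⟩ ≠ ⊤ ∧
        Dseq γ r B m p (e₂ ⟨p m, h2⟩) ≤ giter γ r B Ω hΩ e₂ k ⟨q, h1⟩ := by
  intro k
  induction k with
  | zero =>
      intro q h1 hne
      exact absurd rfl hne
  | succ k ih =>
      intro q h1 hne
      have hnQ : Nonempty Q := ⟨q⟩
      have heq : giter γ r B Ω hΩ e₂ (k + 1) ⟨q, h1⟩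
          = extStepB B γ r (copair Ω hΩ (giter γ r B Ω hΩ e₂ k) e₂) q :=
        congrFun (giter_succ γ r B Ω hΩ e₂ k) ⟨q, h1⟩
      rw [heq] at hne ⊢
      have hx : (⨅ q' : Q, baddB B (γ q q')
          (copair Ω hΩ (giter γ r B Ω hΩ e₂ k) e₂ q')) ≠ ⊤ := by
        intro h
        apply hne
        show csub _ (r q) = ⊤
        rw [h, csub_top_left]
      obtain ⟨q', hq'⟩ := iInf_attained
        (fun q' => baddB B (γ q q') (copair Ω hΩ (giter γ r B Ω hΩ e₂ k) e₂ q'))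
      rw [hq'] at hx
      obtain ⟨hb, _, hγ, hu⟩ := baddB_ne_top hx
      have hstep : extStepB B γ r (copair Ω hΩ (giter γ r B Ω hΩ e₂ k) e₂) q
          = csub (baddB B (γ q q') (copair Ω hΩ (giter γ r B Ω hΩ e₂ k) e₂ q')) (r q) := by
        show csub _ (r q) = _
        rw [hq']
      rcases hΩ q' with h1' | h2'
      · -- successor still in Q₁ : recurse
        rw [copair_of1 Ω hΩ _ _ h1'] at hu hstep
        obtain ⟨m', p', hm', hp0', htr', h2'', hne'', hD''⟩ := ih q' h1' hu
        refine ⟨m' + 1, consQ q p', by omega, rfl, ?_, ?_⟩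
        · intro i hi
          cases i with
          | zero =>
              show γ q (p' 0) ≠ ⊤
              rw [hp0']
              exact hγ
          | succ j =>
              exact htr' j (by omega)
        · refine ⟨h2'', hne'', ?_⟩
          rw [Dseq_cons, hstep]
          have h3 : Dseq γ r B m' p' (e₂ ⟨p' m', h2''⟩)
              ≤ giter γ r B Ω hΩ e₂ k ⟨q', h1'⟩ := hD''
          calc csub (baddB B (γ q (p' 0)) (Dseq γ r B m' p' (e₂ ⟨p' m', h2''⟩))) (r q)
              ≤ csub (baddB B (γ q (p' 0)) (giter γ r B Ω hΩ e₂ k ⟨q', h1'⟩)) (r q) :=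
                csub_mono_left _ (baddB_mono_right B _ h3)
            _ = csub (baddB B (γ q q') (giter γ r B Ω hΩ e₂ k ⟨q', h1'⟩)) (r q) := by
                rw [hp0']
      · -- successor in Q₂ : single step
        rw [copair_of2 Ω hΩ _ _ h2'] at hu hstep
        refine ⟨1, consQ q (fun _ => q'), le_refl 1, rfl, ?_, ?_⟩
        · intro i hi
          have : i = 0 := by omega
          subst this
          show γ q q' ≠ ⊤
          exact hγ
        · refine ⟨h2', hu, ?_⟩
          rw [Dseq_cons, hstep]
          exact le_of_eq rfl

lemma segStart (inn : ({q // Ω q = 2} → ℕ∞) → ({q // Ω q = 1} → ℕ∞))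
    (hinn : HINN γ r B Ω hΩ inn) (hinnG : HING γ r B Ω hΩ inn)
    (e₂ : {q // Ω q = 2} → ℕ∞)
    (he₂ : (fun q : {q // Ω q = 2} =>
      extStepB B γ r (copair Ω hΩ (inn e₂) e₂) q.1) = e₂)
    (ext : Q → ℕ∞) (hext : ext = copair Ω hΩ (inn e₂) e₂)
    (q : Q) (hq : ext q ≠ ⊤) :
    ∃ (m : ℕ) (p : ℕ → Q), 1 ≤ m ∧ p 0 = q ∧
      (∀ i, i < m → γ (p i) (p (i + 1)) ≠ ⊤) ∧
      Ω (p m) = 2 ∧ ext (p m) ≠ ⊤ ∧ Dseq γ r B m p (ext (p m)) ≤ ext q := by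
  have hnQ : Nonempty Q := ⟨q⟩
  obtain ⟨K, hK⟩ := giter_stab γ r B Ω hΩ e₂
  have hinnK : inn e₂ = giter γ r B Ω hΩ e₂ K :=
    inner_eq_giter γ r B Ω hΩ inn hinn hinnG e₂ hK
  have hfix := ext_fix γ r B Ω hΩ inn e₂ hinn he₂ ext hext q
  have hext2 : ∀ (q'' : Q) (h2 : Ω q'' = 2), ext q'' = e₂ ⟨q'', h2⟩ := by
    intro q'' h2
    rw [hext]
    exact copair_of2 Ω hΩ _ _ h2
  have hext1 : ∀ (q'' : Q) (h1 : Ω q'' = 1),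
      ext q'' = giter γ r B Ω hΩ e₂ K ⟨q'', h1⟩ := by
    intro q'' h1
    rw [hext, copair_of1 Ω hΩ _ _ h1, hinnK]
  have hx : (⨅ q' : Q, baddB B (γ q q') (ext q')) ≠ ⊤ := by
    intro h
    apply hq
    rw [hfix]
    show csub _ (r q) = ⊤
    rw [h, csub_top_left]
  obtain ⟨q', hq'⟩ := iInf_attained (fun q' => baddB B (γ q q') (ext q'))
  rw [hq'] at hx
  obtain ⟨hb, _, hγ, hu⟩ := baddB_ne_top hx
  have hstep : ext q = csub (baddB B (γ q q') (ext q')) (r q) := by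
    rw [hfix]
    show csub _ (r q) = _
    rw [hq']
  rcases hΩ q' with h1' | h2'
  · -- q' in Q₁ : use seg1
    have hgne : giter γ r B Ω hΩ e₂ K ⟨q', h1'⟩ ≠ ⊤ := by
      rw [← hext1 q' h1']
      exact hu
    obtain ⟨m', p', hm', hp0', htr', h2'', hne'', hD''⟩ :=
      seg1 γ r B Ω hΩ inn e₂ K q' h1' hgne
    refine ⟨m' + 1, consQ q p', by omega, rfl, ?_, ?_, ?_, ?_⟩
    · intro i hi
      cases i with
      | zero =>
          show γ q (p' 0) ≠ ⊤
          rw [hp0']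
          exact hγ
      | succ j => exact htr' j (by omega)
    · exact h2''
    · have hpt : consQ q p' (m' + 1) = p' m' := rfl
      rw [hpt, hext2 _ h2'']
      exact hne''
    · have hpt : consQ q p' (m' + 1) = p' m' := rfl
      rw [hpt, Dseq_cons, hstep]
      have hs : Dseq γ r B m' p' (ext (p' m')) ≤ ext q' := by
        rw [hext2 _ h2'', hext1 q' h1']
        exact hD''
      calc csub (baddB B (γ q (p' 0)) (Dseq γ r B m' p' (ext (p' m')))) (r q)
          ≤ csub (baddB B (γ q (p' 0)) (ext q')) (r q) :=
            csub_mono_left _ (baddB_mono_right B _ hs)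
        _ = csub (baddB B (γ q q') (ext q')) (r q) := by rw [hp0']
  · -- q' in Q₂ : single step
    refine ⟨1, consQ q (fun _ => q'), le_refl 1, rfl, ?_, h2', hu, ?_⟩
    · intro i hi
      have : i = 0 := by omega
      subst this
      show γ q q' ≠ ⊤
      exact hγ
    · rw [Dseq_cons, hstep]
      exact le_of_eq rfl

end DirI


section Assemble
variable {Q : Type*} [Fintype Q] (γ : Q → Q → ℕ∞) (r : Q → ℕ∞) (B : ℕ)
  (Ω : Q → ℕ)

lemma Dseq_succ (m : ℕ) (p : ℕ → Q) (t : ℕ∞) :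
    Dseq γ r B (m + 1) p t
      = csub (baddB B (γ (p 0) (p 1)) (Dseq γ r B m (fun i => p (i + 1)) t)) (r (p 0)) := rfl

lemma assemble (ext : Q → ℕ∞)
    (SEG : ∀ q : Q, ext q ≠ ⊤ → ∃ (m : ℕ) (p : ℕ → Q), 1 ≤ m ∧ p 0 = q ∧
      (∀ i, i < m → γ (p i) (p (i + 1)) ≠ ⊤) ∧
      Ω (p m) = 2 ∧ ext (p m) ≠ ⊤ ∧ Dseq γ r B m p (ext (p m)) ≤ ext q)
    (q : Q) (hq : ext q ≠ ⊤) :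
    ∃ (z : ℕ → Q) (c : ℕ → ℕ∞), IsRun γ q z ∧ Accepting Ω z ∧ c 0 ≤ ext q ∧
      ∀ n, csub (baddB B (γ (z n) (z (n + 1))) (c (n + 1))) (r (z n)) ≤ c n := by
  classical
  choose M P hm hp0 htr hO2 hne hD using SEG
  obtain ⟨traj, htraj0, htrajS⟩ : ∃ traj : ℕ → (ℕ → Q) × ℕ,
      traj 0 = (P q hq, M q hq) ∧ ∀ n, traj (n + 1) =
        if 2 ≤ (traj n).2 then ((fun i => (traj n).1 (i + 1)), (traj n).2 - 1)
        else if h : ext ((traj n).1 1) ≠ ⊤ then (P ((traj n).1 1) h, M ((traj n).1 1) h)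
        else traj n := by
    refine ⟨fun n => Nat.rec (P q hq, M q hq) (fun _ s =>
      if 2 ≤ s.2 then ((fun i => s.1 (i + 1)), s.2 - 1)
      else if h : ext (s.1 1) ≠ ⊤ then (P (s.1 1) h, M (s.1 1) h)
      else s) n, rfl, fun n => rfl⟩
  -- the `Good` invariant
  have hGood : ∀ n, 1 ≤ (traj n).2 ∧
      (∀ i, i < (traj n).2 → γ ((traj n).1 i) ((traj n).1 (i + 1)) ≠ ⊤) ∧
      Ω ((traj n).1 (traj n).2) = 2 ∧ ext ((traj n).1 (traj n).2) ≠ ⊤ := by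
    intro n
    induction n with
    | zero =>
        rw [htraj0]
        exact ⟨hm q hq, htr q hq, hO2 q hq, hne q hq⟩
    | succ n ih =>
        obtain ⟨ih1, ih2, ih3, ih4⟩ := ih
        rw [htrajS n]
        by_cases h2k : 2 ≤ (traj n).2
        · rw [if_pos h2k]
          have hk : (traj n).2 - 1 + 1 = (traj n).2 := by omega
          refine ⟨by omega, fun i hi => ih2 (i + 1) (by omega), ?_, ?_⟩
          · show Ω ((traj n).1 ((traj n).2 - 1 + 1)) = 2
            rw [hk]; exact ih3
          · show ext ((traj n).1 ((traj n).2 - 1 + 1)) ≠ ⊤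
            rw [hk]; exact ih4
        · have hk1 : (traj n).2 = 1 := by omega
          have hne1 : ext ((traj n).1 1) ≠ ⊤ := by rw [← hk1]; exact ih4
          rw [if_neg h2k, dif_pos hne1]
          exact ⟨hm _ hne1, htr _ hne1, hO2 _ hne1, hne _ hne1⟩
  -- the successor state
  have hzsucc : ∀ n, (traj (n + 1)).1 0 = (traj n).1 1 := by
    intro n
    rw [htrajS n]
    by_cases h2k : 2 ≤ (traj n).2
    · rw [if_pos h2k]
    · have hk1 : (traj n).2 = 1 := by have := (hGood n).1; omega
      have hne1 : ext ((traj n).1 1) ≠ ⊤ := by rw [← hk1]; exact (hGood n).2.2.2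
      rw [if_neg h2k, dif_pos hne1]
      exact hp0 _ hne1
  refine ⟨fun n => (traj n).1 0,
    fun n => Dseq γ r B (traj n).2 ((traj n).1) (ext ((traj n).1 (traj n).2)),
    ⟨?_, ?_⟩, ?_, ?_, ?_⟩
  · -- starts at q
    show (traj 0).1 0 = q
    rw [htraj0]
    exact hp0 q hq
  · -- transitions
    intro n
    show γ ((traj n).1 0) ((traj (n + 1)).1 0) ≠ ⊤
    rw [hzsucc n]
    exact (hGood n).2.1 0 (by have := (hGood n).1; omega)
  · -- accepting
    have hacc1 : ∀ n, (traj n).2 = 1 → Ω ((traj (n + 1)).1 0) = 2 := by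
      intro n h1
      rw [hzsucc n, ← h1]
      exact (hGood n).2.2.1
    have hreach : ∀ (k n : ℕ), (traj n).2 ≤ k + 1 → ∃ n', n ≤ n' ∧ (traj n').2 = 1 := by
      intro k
      induction k with
      | zero =>
          intro n hn
          exact ⟨n, le_refl n, by have := (hGood n).1; omega⟩
      | succ k ihk =>
          intro n hn
          by_cases h1 : (traj n).2 = 1
          · exact ⟨n, le_refl n, h1⟩
          · have h2k : 2 ≤ (traj n).2 := by have := (hGood n).1; omega
            have hnext : (traj (n + 1)).2 = (traj n).2 - 1 := by
              rw [htrajS n, if_pos h2k]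
            obtain ⟨n', hn'1, hn'2⟩ := ihk (n + 1) (by omega)
            exact ⟨n', by omega, hn'2⟩
    intro N
    obtain ⟨n', hn'1, hn'2⟩ := hreach ((traj N).2) N (by omega)
    exact ⟨n' + 1, by omega, hacc1 n' hn'2⟩
  · -- initial cost
    show Dseq γ r B (traj 0).2 ((traj 0).1) (ext ((traj 0).1 (traj 0).2)) ≤ ext q
    rw [htraj0]
    exact hD q hq
  · -- cost chain
    intro n
    show csub (baddB B (γ ((traj n).1 0) ((traj (n + 1)).1 0))
        (Dseq γ r B (traj (n + 1)).2 ((traj (n + 1)).1)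
          (ext ((traj (n + 1)).1 (traj (n + 1)).2)))) (r ((traj n).1 0))
      ≤ Dseq γ r B (traj n).2 ((traj n).1) (ext ((traj n).1 (traj n).2))
    obtain ⟨hg1, hg2, hg3, hg4⟩ := hGood n
    by_cases h2k : 2 ≤ (traj n).2
    · -- inside a segment
      have e1 : traj (n + 1) = ((fun i => (traj n).1 (i + 1)), (traj n).2 - 1) := by
        rw [htrajS n, if_pos h2k]
      obtain ⟨j, hj⟩ : ∃ j, (traj n).2 = j + 2 := ⟨(traj n).2 - 2, by omega⟩
      have ecn : Dseq γ r B (traj n).2 ((traj n).1) (ext ((traj n).1 (traj n).2))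
          = csub (baddB B (γ ((traj n).1 0) ((traj (n + 1)).1 0))
              (Dseq γ r B (traj (n + 1)).2 ((traj (n + 1)).1)
                (ext ((traj (n + 1)).1 (traj (n + 1)).2)))) (r ((traj n).1 0)) := by
        rw [hzsucc n, e1]
        show Dseq γ r B (traj n).2 ((traj n).1) (ext ((traj n).1 (traj n).2))
          = csub (baddB B (γ ((traj n).1 0) ((traj n).1 1))
              (Dseq γ r B ((traj n).2 - 1) (fun i => (traj n).1 (i + 1))
                (ext ((traj n).1 ((traj n).2 - 1 + 1))))) (r ((traj n).1 0))
        have hk : (traj n).2 - 1 + 1 = (traj n).2 := by omega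
        rw [hk]
        conv_lhs => rw [hj]
        have hk2 : (traj n).2 - 1 = j + 1 := by omega
        rw [hk2, Dseq_succ]
        rw [hj]
      rw [ecn]
    · -- segment boundary
      have hk1 : (traj n).2 = 1 := by omega
      have hne1 : ext ((traj n).1 1) ≠ ⊤ := by rw [← hk1]; exact hg4
      have e1 : traj (n + 1) = (P ((traj n).1 1) hne1, M ((traj n).1 1) hne1) := by
        rw [htrajS n, if_neg h2k, dif_pos hne1]
      have hcn1 : Dseq γ r B (traj (n + 1)).2 ((traj (n + 1)).1)
            (ext ((traj (n + 1)).1 (traj (n + 1)).2)) ≤ ext ((traj n).1 1) := by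
        rw [e1]
        exact hD _ hne1
      have ecn : Dseq γ r B (traj n).2 ((traj n).1) (ext ((traj n).1 (traj n).2))
          = csub (baddB B (γ ((traj n).1 0) ((traj n).1 1)) (ext ((traj n).1 1)))
              (r ((traj n).1 0)) := by
        rw [hk1]
        rfl
      rw [ecn, hzsucc n]
      exact csub_mono_left _ (baddB_mono_right B _ hcn1)

lemma val_le_of_chain (val : (ℕ → Q) → ℕ∞) (hval : PhiB B γ r val = val)
    (hvalLeast : ∀ w, PhiB B γ r w = w → val ≤ w)
    (z : ℕ → Q) (c : ℕ → ℕ∞)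
    (hstep : ∀ n, csub (baddB B (γ (z n) (z (n + 1))) (c (n + 1))) (r (z n)) ≤ c n) :
    val z ≤ c 0 := by
  have hA : ∀ k n, Aiter γ r B k (fun m => z (m + n)) ≤ c n := by
    intro k
    induction k with
    | zero => intro n; exact bot_le
    | succ k ih =>
        intro n
        set zn : ℕ → Q := fun m => z (m + n) with hzn
        have e0 : zn 0 = z n := congrArg z (by omega)
        have e1 : zn 1 = z (n + 1) := congrArg z (by omega)
        have e2 : (fun m => zn (m + 1)) = (fun m => z (m + (n + 1))) :=
          funext fun m => congrArg z (by omega)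
        rw [Aiter_succ, e0, e1, e2]
        exact le_trans (csub_mono_left _ (baddB_mono_right B _ (ih (n + 1)))) (hstep n)
  have hz : (fun m => z (m + 0)) = z := funext fun m => congrArg z (by omega)
  rw [val_eq_Vfun γ r B val hval hvalLeast]
  refine iSup_le fun k => ?_
  have hk := hA k 0
  rw [hz] at hk
  exact hk

end Assemble

end Stmt12Aux

/-- for every state `q` of a B-bounded resource-aware Büchi word
automaton, `ext q = sInf { val z | z an accepting run from q }` (in `(ℕ∞, ≤)`,
with `sInf ∅ = ∞`). -/
theorem stmt12 {Q : Type*} [Fintype Q]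
    (γ : Q → Q → ℕ∞) (r : Q → ℕ∞) (Ω : Q → ℕ) (hΩ : ∀ q, Ω q = 1 ∨ Ω q = 2)
    -- B-boundedness: every finite value of `γ` and of `r` is at most `B`
    (B : ℕ)
    (hγB : ∀ q q', γ q q' ≠ ⊤ → γ q q' ≤ (B : ℕ∞))
    (hrB : ∀ q, r q ≠ ⊤ → r q ≤ (B : ℕ∞))
    -- `val` is the `≤`-least fixpoint (pointwise order) of `Φ`
    (val : (ℕ → Q) → ℕ∞)
    (hval : PhiB B γ r val = val)
    (hvalLeast : ∀ w, PhiB B γ r w = w → val ≤ w)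
    -- `inner u₂` is the `≤`-greatest fixpoint of `u₁ ↦ extStep [u₁, u₂]` on `Q₁`
    (inner : ({q // Ω q = 2} → ℕ∞) → ({q // Ω q = 1} → ℕ∞))
    (hinner : ∀ u₂, (fun q : {q // Ω q = 1} =>
      extStepB B γ r (copair Ω hΩ (inner u₂) u₂) q.1) = inner u₂)
    (hinnerGreatest : ∀ u₂ u₁, (fun q : {q // Ω q = 1} =>
      extStepB B γ r (copair Ω hΩ u₁ u₂) q.1) = u₁ → u₁ ≤ inner u₂)
    -- `e₂` is the `≤`-least fixpoint of `u₂ ↦ extStep [inner u₂, u₂]` on `Q₂`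
    (e₂ : {q // Ω q = 2} → ℕ∞)
    (he₂ : (fun q : {q // Ω q = 2} =>
      extStepB B γ r (copair Ω hΩ (inner e₂) e₂) q.1) = e₂)
    (he₂Least : ∀ u₂, (fun q : {q // Ω q = 2} =>
      extStepB B γ r (copair Ω hΩ (inner u₂) u₂) q.1) = u₂ → e₂ ≤ u₂)
    -- the extent is the copairing `[inner e₂, e₂]`
    (ext : Q → ℕ∞) (hext : ext = copair Ω hΩ (inner e₂) e₂)
    (q : Q) :
    ext q = sInf {v : ℕ∞ | ∃ z : ℕ → Q, IsRun γ q z ∧ Accepting Ω z ∧ val z = v} := by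
  apply le_antisymm
  · exact Stmt12Aux.dirII γ r B Ω hΩ inner hinner hinnerGreatest e₂ he₂Least val hval
      ext hext q
  · by_cases hq : ext q = ⊤
    · rw [hq]; exact le_top
    · obtain ⟨z, c, hrun, hacc, hc0, hstep⟩ :=
        Stmt12Aux.assemble γ r B Ω ext
          (fun q' hq' => Stmt12Aux.segStart γ r B Ω hΩ inner hinner hinnerGreatest
            e₂ he₂ ext hext q' hq') q hq
      have hv : val z ≤ c 0 :=
        Stmt12Aux.val_le_of_chain γ r B val hval hvalLeast z c hstep
      exact le_trans (sInf_le ⟨z, hrun, hacc, rfl⟩) (le_trans hv hc0)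
end
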